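/- arXiv:2209.10857 — 5 statements merged into one kernel-verified Lean document; each statement's English description precedes it below -/
import Mathlib

section
/- Let U = ∏_{v∈Σ_K} U_v ⊆ A_K be a nonempty basic open set of A_K, i.e. each U_v ⊆ K_v is open and nonempty and U_v = O_{K,v} for all but finitely many v. Then F := {v ∈ Σ_K : 0 ∉ U_v} is finite and Ξ(U) ∩ 2^{Σ_K} = U_F := {T ⊆ Σ_K : T ∩ F = ∅}. -/
open NumberField IsDedekindDomain

noncomputable section

variable (K : Type*) [Field K] [NumberField K]

/-- The set of places of the number field `K`: infinite places plus finite places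
(nonzero primes of the ring of integers). -/
abbrev Place := InfinitePlace K ⊕ HeightOneSpectrum (𝓞 K)

/-- The local completion of `K` at a place. -/
def LocalField : Place K → Type _
  | .inl w => w.Completion
  | .inr v => v.adicCompletion K

instance : ∀ v : Place K, TopologicalSpace (LocalField K v)
  | .inl w => inferInstanceAs (TopologicalSpace w.Completion)
  | .inr v => inferInstanceAs (TopologicalSpace (v.adicCompletion K))

instance : ∀ v : Place K, Zero (LocalField K v)
  | .inl w => inferInstanceAs (Zero w.Completion)
  | .inr v => inferInstanceAs (Zero (v.adicCompletion K))

/-- The `v`-coordinate of an adele. -/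
def coord (a : AdeleRing (𝓞 K) K) : ∀ v : Place K, LocalField K v
  | .inl w => a.1 w
  | .inr v => a.2 v

/-- The local ring of integers `O_{K,v}`: for a finite place, the ring of integers of
`K_v`; for an infinite place, by convention, all of `K_v`. -/
def localIntegers : ∀ v : Place K, Set (LocalField K v)
  | .inl _ => Set.univ
  | .inr v => (v.adicCompletionIntegers K : Set (v.adicCompletion K))

/-- The zero set `Z(a)` of an adele: the set of places where the component of `a` vanishes. -/
def zeroSet (a : AdeleRing (𝓞 K) K) : Set (Place K) := {v | coord K a v = 0}

open scoped Classical in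
/-- The normalized absolute value at a place `v`, as a function on the local field:
for a real place the usual absolute value, for a complex place its square, and for a
finite place `N(v)^(-val(x))`. -/
def placeAbs : ∀ v : Place K, LocalField K v → ℝ
  | .inl w => fun x : w.Completion => if w.IsReal then ‖x‖ else ‖x‖ ^ 2
  | .inr v => fun x : v.adicCompletion K =>
      if hx : Valued.v x = (0 : WithZero (Multiplicative ℤ)) then 0
      else (Nat.card (𝓞 K ⧸ v.asIdeal) : ℝ) ^ Multiplicative.toAdd (WithZero.unzero hx)

/-- The normalized absolute value `|a|_v` of an adele at a place. -/
def adeleAbs (v : Place K) (a : AdeleRing (𝓞 K) K) : ℝ := placeAbs K v (coord K a v)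

/-- The adelic norm `‖a‖ = ∏_v |a|_v`, defined as the infimum of the partial products over
finite sets of places containing every place where `|a|_v > 1`. -/
def adelicNorm (a : AdeleRing (𝓞 K) K) : ℝ :=
  sInf {r : ℝ | ∃ F : Finset (Place K),
    (∀ v : Place K, 1 < adeleAbs K v a → v ∈ F) ∧ r = ∏ v ∈ F, adeleAbs K v a}

/-- The subgroup of principal ideles. -/
def principalIdeles : Subgroup (AdeleRing (𝓞 K) K)ˣ :=
  (Units.map (algebraMap K (AdeleRing (𝓞 K) K)).toMonoidHom).range

/-- The idele class group `C_K = A_K^*/K^*`, with the quotient of the idelic topology.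
(The idelic topology on `A_K^*` is the topology of the unit group `(A_K)ˣ`, i.e. the
subspace topology under `a ↦ (a, a⁻¹)`.) -/
abbrev IdeleClassGroup := (AdeleRing (𝓞 K) K)ˣ ⧸ principalIdeles K

/-- The orbit `K^*·a` of an adele under the multiplication action of `K^*`. -/
def mulOrbit (a : AdeleRing (𝓞 K) K) : Set (AdeleRing (𝓞 K) K) :=
  {b | ∃ x : Kˣ, algebraMap K (AdeleRing (𝓞 K) K) (x : K) * a = b}

open scoped Classical in
/-- The map `Ξ : A_K → 2^{Σ_K} ⊔ C_K`. -/
def Xi (a : AdeleRing (𝓞 K) K) : Set (Place K) ⊕ IdeleClassGroup K :=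
  if h : IsUnit a then Sum.inr (QuotientGroup.mk h.unit)
  else Sum.inl (zeroSet K a)

/-- The quasi-orbit topology on `2^{Σ_K} ⊔ C_K`: the final topology induced by `Ξ`. -/
def qoTop : TopologicalSpace (Set (Place K) ⊕ IdeleClassGroup K) :=
  TopologicalSpace.coinduced (Xi K) inferInstance

/-- The power-cofinite topology on `2^{Σ_K}`, generated by the sets
`U_F = {T : T ∩ F = ∅}` for finite `F ⊆ Σ_K`. -/
def pcTop : TopologicalSpace (Set (Place K)) :=
  TopologicalSpace.generateFrom
    {S | ∃ F : Finset (Place K), S = {T : Set (Place K) | ∀ v ∈ F, v ∉ T}}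

/-- The norm on the idele class group (defined via representatives; by the product
formula it does not depend on the choice of representative). -/
def classNorm (c : IdeleClassGroup K) : ℝ := adelicNorm K (Quotient.out c : (AdeleRing (𝓞 K) K)ˣ)



section XiAux

open IsDedekindDomain.HeightOneSpectrum UniformSpace

variable {K : Type*} [Field K] [NumberField K]

lemma XiAux.zero_mem_localIntegers (v : Place K) : (0 : LocalField K v) ∈ localIntegers K v := by
  cases v with
  | inl w => exact Set.mem_univ _
  | inr v =>
    show (0 : v.adicCompletion K) ∈ v.adicCompletionIntegers K
    rw [mem_adicCompletionIntegers]
    simp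

lemma XiAux.exists_uniformizer (v : HeightOneSpectrum (𝓞 K)) :
    ∃ x : v.adicCompletion K,
      Valued.v x = ((Multiplicative.ofAdd (-1 : ℤ) : Multiplicative ℤ) :
        WithZero (Multiplicative ℤ)) := by
  obtain ⟨π, hπ⟩ := v.valuation_exists_uniformizer K
  exact ⟨(π : v.adicCompletion K), by rw [valuedAdicCompletion_eq_valuation', hπ]; rfl⟩

lemma XiAux.exists_valued_lt (v : HeightOneSpectrum (𝓞 K))
    (γ : (WithZero (Multiplicative ℤ))ˣ) :
    ∃ x : v.adicCompletion K, x ≠ 0 ∧ Valued.v x < (γ : WithZero (Multiplicative ℤ)) := by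
  obtain ⟨π, hπ⟩ := XiAux.exists_uniformizer v
  obtain ⟨g, hg⟩ := WithZero.ne_zero_iff_exists.mp γ.ne_zero
  refine ⟨π ^ ((Multiplicative.toAdd g).natAbs + 1), ?_, ?_⟩
  · have hv : Valued.v (π ^ ((Multiplicative.toAdd g).natAbs + 1)) ≠ 0 := by
      rw [map_pow, hπ, ← WithZero.coe_pow]
      exact WithZero.coe_ne_zero
    intro h0
    rw [h0, map_zero] at hv
    exact hv rfl
  · rw [map_pow, hπ, ← WithZero.coe_pow, ← hg, WithZero.coe_lt_coe, ← Multiplicative.toAdd_lt]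
    rw [toAdd_pow, toAdd_ofAdd, nsmul_eq_mul]
    omega

lemma XiAux.exists_norm_lt_completion (w : NumberField.InfinitePlace K) {ε : ℝ} (hε : 0 < ε) :
    ∃ x : w.Completion, x ≠ 0 ∧ ‖x‖ < ε := by
  have h2 : ‖((2 : WithAbs w.1) : w.Completion)‖ = 2 := by
    rw [NumberField.InfinitePlace.Completion.norm_coe]
    change ‖(2 : WithAbs w.1)‖ = 2
    have : ‖(2 : WithAbs w.1)‖ = ‖w.embedding (2 : K)‖ := by
      rw [NumberField.InfinitePlace.norm_embedding_eq]; rfl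
    rw [this, map_ofNat]
    simp
  set c : w.Completion := ((2 : WithAbs w.1) : w.Completion)⁻¹ with hc
  have hc2 : ((2 : WithAbs w.1) : w.Completion) ≠ 0 := by
    intro h; rw [h, norm_zero] at h2; norm_num at h2
  have hcn : ‖c‖ = 2⁻¹ := by rw [hc, norm_inv, h2]
  obtain ⟨n, hn⟩ := exists_pow_lt_of_lt_one hε (by norm_num : (2⁻¹ : ℝ) < 1)
  refine ⟨c ^ n, pow_ne_zero n (inv_ne_zero hc2), ?_⟩
  rw [norm_pow, hcn]
  exact hn

lemma XiAux.exists_ne_zero_mem {v : Place K} {U : Set (LocalField K v)} (hU : IsOpen U)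
    (hne : U.Nonempty) : ∃ x ∈ U, x ≠ 0 := by
  obtain ⟨y, hy⟩ := hne
  by_cases hy0 : y = 0
  · subst hy0
    cases v with
    | inl w =>
      let U' : Set w.Completion := U
      have hU' : IsOpen U' := hU
      obtain ⟨ε, hε, hball⟩ := Metric.isOpen_iff.mp hU' (0 : w.Completion) hy
      obtain ⟨x, hx0, hxε⟩ := XiAux.exists_norm_lt_completion w hε
      exact ⟨x, hball (by simpa [Metric.mem_ball, dist_zero_right] using hxε), hx0⟩
    | inr v =>
      let U' : Set (v.adicCompletion K) := U
      have hU' : IsOpen U' := hU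
      have h0 : U' ∈ nhds (0 : v.adicCompletion K) := hU'.mem_nhds hy
      rw [Valued.mem_nhds_zero] at h0
      obtain ⟨γ, hγ⟩ := h0
      obtain ⟨x, hx0, hxγ⟩ := XiAux.exists_valued_lt v
        (Units.map (MonoidWithZeroHom.ValueGroup₀.embedding).toMonoidHom γ)
      exact ⟨x, hγ ((Valuation.restrict_lt_iff_lt_embedding _).mpr hxγ), hx0⟩
  · exact ⟨y, hy, hy0⟩

lemma XiAux.infinite_heightOneSpectrum :
    Infinite (HeightOneSpectrum (𝓞 K)) := by
  have hinj : Function.Injective (algebraMap ℤ (𝓞 K)) := by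
    have : (algebraMap ℤ (𝓞 K)) = Int.castRingHom (𝓞 K) := by
      ext; simp
    rw [this]
    exact Int.cast_injective
  have key : ∀ p : Nat.Primes, ∃ v : HeightOneSpectrum (𝓞 K),
      (v.asIdeal).comap (algebraMap ℤ (𝓞 K)) = Ideal.span {((p : ℕ) : ℤ)} := by
    rintro ⟨p, hp⟩
    have hprime : Prime ((p : ℤ)) := Nat.prime_iff_prime_int.mp hp
    haveI : (Ideal.span {(p : ℤ)}).IsPrime :=
      (Ideal.span_singleton_prime hprime.ne_zero).mpr hprime
    obtain ⟨Q, hQle, hQprime, hQcomap⟩ :=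
      Ideal.exists_ideal_over_prime_of_isIntegral (Ideal.span {(p : ℤ)})
        (⊥ : Ideal (𝓞 K)) (by
          rw [← RingHom.ker_eq_comap_bot, (RingHom.injective_iff_ker_eq_bot _).mp hinj]
          exact bot_le)
    have hQbot : Q ≠ ⊥ := by
      intro h
      rw [h, ← RingHom.ker_eq_comap_bot, (RingHom.injective_iff_ker_eq_bot _).mp hinj] at hQcomap
      exact hprime.ne_zero (by
        simpa using (Ideal.span_singleton_eq_bot.mp hQcomap.symm))
    exact ⟨⟨Q, hQprime, hQbot⟩, hQcomap⟩
  choose f hf using key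
  have hfinj : Function.Injective f := by
    intro p q hpq
    have : Ideal.span {((p : ℕ) : ℤ)} = Ideal.span {((q : ℕ) : ℤ)} := by
      rw [← hf p, ← hf q, hpq]
    have hass := Ideal.span_singleton_eq_span_singleton.mp this
    rcases Int.associated_iff.mp hass with h | h <;>
      · apply Subtype.ext
        have hp1 := p.2.two_le
        have hq1 := q.2.two_le
        omega
  exact Infinite.of_injective f hfinj

end XiAux

/-- Let `U = ∏_v U_v` be a nonempty basic open set of `A_K` (each `U_v ⊆ K_v` open and
nonempty, and `U_v = O_{K,v}` for all but finitely many `v`). Then `F = {v : 0 ∉ U_v}` is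
finite and `Ξ(U) ∩ 2^{Σ_K} = U_F = {T ⊆ Σ_K : T ∩ F = ∅}`. -/
theorem xi_image_basicOpen_inter_powerSet (U : ∀ v : Place K, Set (LocalField K v))
    (hopen : ∀ v : Place K, IsOpen (U v)) (hne : ∀ v : Place K, (U v).Nonempty)
    (hfin : {v : Place K | U v ≠ localIntegers K v}.Finite) :
    {v : Place K | 0 ∉ U v}.Finite ∧
    {T : Set (Place K) |
        Sum.inl T ∈ Xi K '' {a : AdeleRing (𝓞 K) K | ∀ v : Place K, coord K a v ∈ U v}} =
      {T : Set (Place K) | T ∩ {v : Place K | 0 ∉ U v} = ∅} := by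
  classical
  have hF : {v : Place K | 0 ∉ U v}.Finite := by
    refine hfin.subset fun v hv heq => ?_
    exact hv (by rw [heq]; exact XiAux.zero_mem_localIntegers v)
  refine ⟨hF, ?_⟩
  -- choose nonzero elements of each `U v`
  choose b hbU hb0 using fun v : Place K => XiAux.exists_ne_zero_mem (hopen v) (hne v)
  -- the fact `ofAdd (-1) < 1` in `ℤₘ₀`
  have h1 : ((Multiplicative.ofAdd (-1 : ℤ) : Multiplicative ℤ) :
      WithZero (Multiplicative ℤ)) < 1 := by
    rw [← WithZero.coe_one, WithZero.coe_lt_coe, ← Multiplicative.toAdd_lt]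
    simp
  -- the modified choice: at finite places where `U v` is the ring of integers, use a
  -- uniformizer instead
  set c : ∀ v : Place K, LocalField K v := fun v =>
    Sum.rec (fun w => b (.inl w))
      (fun w => if U (.inr w) = localIntegers K (.inr w)
        then (XiAux.exists_uniformizer w).choose else b (.inr w)) v with hc
  have hcval : ∀ w : IsDedekindDomain.HeightOneSpectrum (𝓞 K),
      U (.inr w) = localIntegers K (.inr w) →
      Valued.v (show w.adicCompletion K from c (.inr w)) =
        ((Multiplicative.ofAdd (-1 : ℤ) : Multiplicative ℤ) : WithZero (Multiplicative ℤ)) := by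
    intro w hw
    show Valued.v (if U (.inr w) = localIntegers K (.inr w)
        then (XiAux.exists_uniformizer w).choose else b (.inr w)) = _
    erw [if_pos hw]
    exact (XiAux.exists_uniformizer w).choose_spec
  have hcint : ∀ w : IsDedekindDomain.HeightOneSpectrum (𝓞 K),
      U (.inr w) = localIntegers K (.inr w) →
      (show w.adicCompletion K from c (.inr w)) ∈ w.adicCompletionIntegers K := by
    intro w hw
    rw [IsDedekindDomain.HeightOneSpectrum.mem_adicCompletionIntegers, hcval w hw]
    exact le_of_lt h1
  have hcU : ∀ v : Place K, c v ∈ U v := by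
    intro v
    cases v with
    | inl w => exact hbU _
    | inr w =>
      by_cases hw : U (.inr w) = localIntegers K (.inr w)
      · rw [hw]
        exact hcint w hw
      · show (if U (.inr w) = localIntegers K (.inr w)
            then (XiAux.exists_uniformizer w).choose else b (.inr w)) ∈ U (.inr w)
        erw [if_neg hw]
        exact hbU _
  have hc0 : ∀ v : Place K, c v ≠ 0 := by
    intro v
    cases v with
    | inl w => exact hb0 _
    | inr w =>
      by_cases hw : U (.inr w) = localIntegers K (.inr w)
      · intro h0
        have := hcval w hw
        rw [show (show w.adicCompletion K from c (.inr w)) = 0 from h0, map_zero] at this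
        exact WithZero.coe_ne_zero this.symm
      · show (if U (.inr w) = localIntegers K (.inr w)
            then (XiAux.exists_uniformizer w).choose else b (.inr w)) ≠ 0
        exact (if_neg hw).symm ▸ hb0 _
  have hbad : {w : IsDedekindDomain.HeightOneSpectrum (𝓞 K) |
      U (.inr w) ≠ localIntegers K (.inr w)}.Finite :=
    hfin.preimage (Sum.inr_injective.injOn)
  ext T
  simp only [Set.mem_setOf_eq, Set.mem_image]
  constructor
  · rintro ⟨a, ha, hXia⟩
    by_cases hu : IsUnit a
    · rw [Xi, dif_pos hu] at hXia
      exact absurd hXia (by simp)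
    · rw [Xi, dif_neg hu] at hXia
      have hzT : zeroSet K a = T := Sum.inl.inj hXia
      rw [Set.eq_empty_iff_forall_notMem]
      rintro v ⟨hvT, hvF⟩
      rw [← hzT] at hvT
      exact hvF (hvT ▸ ha v)
  · intro hT
    have hT' : ∀ v ∈ T, (0 : LocalField K v) ∈ U v := by
      intro v hv
      by_contra h
      exact Set.eq_empty_iff_forall_notMem.mp hT v ⟨hv, h⟩
    set ainf : InfiniteAdeleRing K :=
      fun w => if Sum.inl w ∈ T then 0 else c (.inl w) with hainf
    set afin0 : ∀ w : IsDedekindDomain.HeightOneSpectrum (𝓞 K), w.adicCompletion K :=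
      fun w => if Sum.inr w ∈ T then 0 else c (.inr w) with hafin0
    have hafin : ∀ᶠ w in Filter.cofinite, afin0 w ∈ w.adicCompletionIntegers K := by
      rw [Filter.eventually_cofinite]
      refine hbad.subset fun w hw => ?_
      intro heq
      apply hw
      show (if Sum.inr w ∈ T then 0 else c (.inr w)) ∈ w.adicCompletionIntegers K
      split_ifs
      · erw [IsDedekindDomain.HeightOneSpectrum.mem_adicCompletionIntegers, map_zero]
        exact zero_le'
      · exact hcint w heq
    set afin : IsDedekindDomain.FiniteAdeleRing (𝓞 K) K := ⟨afin0, hafin⟩ with hafin'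
    set a : AdeleRing (𝓞 K) K := (ainf, afin) with haa
    have hcoord : ∀ v : Place K, coord K a v = if v ∈ T then (0 : LocalField K v) else c v := by
      intro v
      cases v with
      | inl w => rfl
      | inr w => rfl
    have ha : ∀ v : Place K, coord K a v ∈ U v := by
      intro v
      rw [hcoord]
      split_ifs with h
      · exact hT' v h
      · exact hcU v
    have hz : zeroSet K a = T := by
      ext v
      show coord K a v = 0 ↔ v ∈ T
      rw [hcoord]
      split_ifs with h
      · exact iff_of_true rfl h
      · exact iff_of_false (hc0 v) h
    have hnu : ¬ IsUnit a := by
      rintro ⟨u, hu'⟩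
      have hmul : a * (↑u⁻¹ : AdeleRing (𝓞 K) K) = 1 := by rw [← hu']; exact u.mul_inv
      have hcomp : ∀ w : IsDedekindDomain.HeightOneSpectrum (𝓞 K),
          afin0 w * ((↑u⁻¹ : AdeleRing (𝓞 K) K).2 w) = 1 := by
        intro w
        have h2 : (a * (↑u⁻¹ : AdeleRing (𝓞 K) K)).2 = 1 := by rw [hmul]; rfl
        exact congrArg (fun x : IsDedekindDomain.FiniteAdeleRing (𝓞 K) K =>
            x w) h2
      haveI : Infinite (IsDedekindDomain.HeightOneSpectrum (𝓞 K)) :=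
        XiAux.infinite_heightOneSpectrum (K := K)
      have hfin2 : ({w : IsDedekindDomain.HeightOneSpectrum (𝓞 K) |
            U (.inr w) ≠ localIntegers K (.inr w)} ∪
          {w : IsDedekindDomain.HeightOneSpectrum (𝓞 K) |
            (↑u⁻¹ : AdeleRing (𝓞 K) K).2 w ∉
              w.adicCompletionIntegers K}).Finite :=
        hbad.union (Filter.eventually_cofinite.mp (↑u⁻¹ : AdeleRing (𝓞 K) K).2.2)
      obtain ⟨w, hw⟩ := hfin2.infinite_compl.nonempty
      rw [Set.compl_union, Set.mem_inter_iff, Set.mem_compl_iff, Set.mem_compl_iff,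
        Set.mem_setOf_eq, Set.mem_setOf_eq, not_not, not_not] at hw
      obtain ⟨hw1, hw2⟩ := hw
      have hvlt : Valued.v (afin0 w) < 1 := by
        show Valued.v (if Sum.inr w ∈ T then (0 : w.adicCompletion K) else c (.inr w)) < 1
        split_ifs with hT0
        · erw [if_pos hT0, map_zero]
          exact lt_of_le_of_ne zero_le' (Ne.symm one_ne_zero)
        · erw [if_neg hT0, hcval w hw1]
          exact h1
      have hcontr : Valued.v ((1 : w.adicCompletion K)) < 1 := by
        rw [← hcomp w, map_mul]
        calc Valued.v (afin0 w) *
              Valued.v ((↑u⁻¹ : AdeleRing (𝓞 K) K).2 w)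
            ≤ Valued.v (afin0 w) * 1 := mul_le_mul_right
              ((IsDedekindDomain.HeightOneSpectrum.mem_adicCompletionIntegers _ _ _).mp hw2) _
          _ < 1 := by rwa [mul_one]
      rw [map_one] at hcontr
      exact lt_irrefl 1 hcontr
    refine ⟨a, ha, ?_⟩
    rw [Xi, dif_neg hnu, hz]

end
end

section
/- For every finite subset F ⊆ Σ_K, one has Ξ(∏_{v∈F} K_v^* × ∏_{v∉F} O_{K,v}) = U_F ⊔ C_K, where U_F := {T ⊆ Σ_K : T ∩ F = ∅}. Consequently, for every nonempty finite F ⊆ Σ_K, the set 2^{Σ_K}∖U_F is closed in (2^{Σ_K} ⊔ C_K, qo). -/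
open NumberField IsDedekindDomain

noncomputable section

variable (K : Type*) [Field K] [NumberField K]

namespace XiHelpers

open IsDedekindDomain.HeightOneSpectrum
open scoped Classical nonZeroDivisors

theorem not_isUnit_natCast_prime {p : ℕ} (hp : p.Prime) : ¬ IsUnit (p : 𝓞 K) := by
  intro h
  rw [NumberField.isUnit_iff_norm] at h
  have h1 : ((RingOfIntegers.norm ℚ ((p : 𝓞 K))) : ℚ) = (p : ℚ) ^ (Module.finrank ℚ K) := by
    rw [RingOfIntegers.coe_norm]
    push_cast
    rw [show ((p : K)) = algebraMap ℚ K (p : ℚ) by push_cast; ring]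
    exact Algebra.norm_algebraMap (p : ℚ)
  rw [h1] at h
  have h2 : (1 : ℚ) < (p : ℚ) ^ (Module.finrank ℚ K) := by
    apply one_lt_pow₀ (by exact_mod_cast hp.one_lt) (Module.finrank_pos (R := ℚ) (M := K)).ne'
  rw [abs_of_pos (lt_trans one_pos h2)] at h
  exact absurd h h2.ne'

instance infinite_heightOneSpectrum : Infinite (HeightOneSpectrum (𝓞 K)) := by
  have : ∀ p : {p : ℕ // p.Prime}, ∃ v : HeightOneSpectrum (𝓞 K), ((p : ℕ) : 𝓞 K) ∈ v.asIdeal := by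
    rintro ⟨p, hp⟩
    obtain ⟨M, hM, hle⟩ := Ideal.exists_le_maximal (Ideal.span {((p:ℕ) : 𝓞 K)})
      (by rw [ne_eq, Ideal.span_singleton_eq_top]; exact not_isUnit_natCast_prime K hp)
    have hmem : ((p:ℕ) : 𝓞 K) ∈ M := hle (Ideal.subset_span rfl)
    refine ⟨⟨M, hM.isPrime, ?_⟩, hmem⟩
    rintro rfl
    exact Nat.cast_ne_zero.2 hp.ne_zero (Ideal.mem_bot.1 hmem)
  choose f hf using this
  haveI : Infinite {p : ℕ // p.Prime} := Nat.infinite_setOf_prime.to_subtype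
  refine Infinite.of_injective f ?_
  rintro ⟨p, hp⟩ ⟨q, hq⟩ hpq
  ext
  by_contra hne
  have hcop : IsCoprime ((p : ℤ)) ((q : ℤ)) := by
    rw [Int.isCoprime_iff_gcd_eq_one]
    exact Nat.coprime_primes hp hq |>.2 hne
  have hcop' : IsCoprime ((p : ℕ) : 𝓞 K) ((q : ℕ) : 𝓞 K) := by
    have := hcop.map (algebraMap ℤ (𝓞 K))
    simpa using this
  obtain ⟨a, b, hab⟩ := hcop'
  have h1 : (1 : 𝓞 K) ∈ (f ⟨p, hp⟩).asIdeal := by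
    rw [← hab]
    exact Ideal.add_mem _ (Ideal.mul_mem_left _ _ (hf ⟨p, hp⟩))
      (Ideal.mul_mem_left _ _ (hpq ▸ hf ⟨q, hq⟩))
  exact (f ⟨p, hp⟩).isPrime.ne_top (Ideal.eq_top_of_isUnit_mem _ h1 isUnit_one)

/-- A chosen uniformizer of `𝓞 K` at a finite place. -/
def unif (v : HeightOneSpectrum (𝓞 K)) : 𝓞 K :=
  (v.intValuation_exists_uniformizer).choose

lemma intValuation_unif (v : HeightOneSpectrum (𝓞 K)) :
    v.intValuation (unif K v) = Multiplicative.ofAdd (-1 : ℤ) :=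
  (v.intValuation_exists_uniformizer).choose_spec

lemma unif_ne_zero (v : HeightOneSpectrum (𝓞 K)) : unif K v ≠ 0 := by
  intro h
  have := intValuation_unif K v
  rw [h, Valuation.map_zero] at this
  exact (WithZero.coe_ne_zero (a := Multiplicative.ofAdd (-1 : ℤ))) this.symm

/-- The image of the chosen uniformizer in the local completion. -/
def pi (v : HeightOneSpectrum (𝓞 K)) : v.adicCompletion K :=
  algebraMap (𝓞 K) (v.adicCompletion K) (unif K v)

lemma valued_pi (v : HeightOneSpectrum (𝓞 K)) :
    Valued.v (pi K v) = (Multiplicative.ofAdd (-1 : ℤ) : Multiplicative ℤ) := by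
  rw [pi, IsScalarTower.algebraMap_apply (𝓞 K) K (v.adicCompletion K),
    show (algebraMap K (v.adicCompletion K)) (algebraMap (𝓞 K) K (unif K v))
      = ((algebraMap (𝓞 K) K (unif K v) : K) : v.adicCompletion K) from rfl,
    valuedAdicCompletion_eq_valuation', valuation_of_algebraMap,
    intValuation_unif]

lemma pi_ne_zero (v : HeightOneSpectrum (𝓞 K)) : pi K v ≠ 0 := by
  intro h
  have := valued_pi K v
  rw [h, Valuation.map_zero] at this
  exact (WithZero.coe_ne_zero (a := Multiplicative.ofAdd (-1 : ℤ))) this.symm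

lemma pi_mem_integers (v : HeightOneSpectrum (𝓞 K)) :
    pi K v ∈ v.adicCompletionIntegers K := by
  rw [mem_adicCompletionIntegers, valued_pi]
  exact_mod_cast le_of_lt (by exact_mod_cast Multiplicative.ofAdd_lt.2 (by decide) :
    (Multiplicative.ofAdd (-1 : ℤ)) < (1 : Multiplicative ℤ))


/-- A model adele whose zero set is exactly `T`, and which is everywhere integral
with all nonzero finite components of valuation `< 1`. -/
def modelAdele (T : Set (Place K)) : AdeleRing (𝓞 K) K :=
  (fun w => if Sum.inl w ∈ T then 0 else 1,
   ⟨fun v => if Sum.inr v ∈ T then 0 else pi K v, by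
      apply Filter.Eventually.of_forall
      intro v
      by_cases h : Sum.inr v ∈ T
      · simp only [h, if_true]
        exact zero_mem _
      · simp only [h, if_false]
        exact pi_mem_integers K v⟩)

lemma modelAdele_fst (T : Set (Place K)) (w : InfinitePlace K) :
    (modelAdele K T).1 w = if Sum.inl w ∈ T then 0 else 1 := rfl

lemma modelAdele_snd (T : Set (Place K)) (v : HeightOneSpectrum (𝓞 K)) :
    (modelAdele K T).2 v = if Sum.inr v ∈ T then 0 else pi K v := rfl

lemma coord_inl (a : AdeleRing (𝓞 K) K) (w : InfinitePlace K) :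
    coord K a (Sum.inl w) = a.1 w := rfl

lemma coord_inr (a : AdeleRing (𝓞 K) K) (v : HeightOneSpectrum (𝓞 K)) :
    coord K a (Sum.inr v) = a.2 v := rfl

lemma zeroSet_modelAdele (T : Set (Place K)) : zeroSet K (modelAdele K T) = T := by
  ext v
  cases v with
  | inl w =>
    show ((modelAdele K T).1 w = 0) ↔ _
    rw [modelAdele_fst]
    by_cases h : Sum.inl w ∈ T
    · simp [h]
    · simp [h]
  | inr v =>
    show ((modelAdele K T).2 v = 0) ↔ _
    rw [modelAdele_snd]
    by_cases h : Sum.inr v ∈ T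
    · simp [h]
    · simp [h, pi_ne_zero K v]

lemma snd_apply_mul (x y : FiniteAdeleRing (𝓞 K) K) (v : HeightOneSpectrum (𝓞 K)) :
    (x * y) v = x v * y v := rfl

lemma one_lt_ofAdd_one :
    (1 : WithZero (Multiplicative ℤ)) < ((Multiplicative.ofAdd (1 : ℤ) : Multiplicative ℤ) :
      WithZero (Multiplicative ℤ)) := by
  exact_mod_cast (by exact_mod_cast Multiplicative.ofAdd_lt.2 (by decide) :
    (1 : Multiplicative ℤ) < Multiplicative.ofAdd (1 : ℤ))

lemma not_isUnit_modelAdele (T : Set (Place K)) : ¬ IsUnit (modelAdele K T) := by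
  intro h
  obtain ⟨u, hu⟩ := h
  set a := modelAdele K T with ha
  set b := ((u⁻¹ : (AdeleRing (𝓞 K) K)ˣ) : AdeleRing (𝓞 K) K) with hb
  have hmul : a * b = 1 := by rw [← hu, hb]; exact u.mul_inv
  have hmul2 : a.2 * b.2 = 1 := congrArg Prod.snd hmul
  have hcomp : ∀ v : HeightOneSpectrum (𝓞 K), a.2 v * b.2 v = 1 := by
    intro v
    rw [← snd_apply_mul K a.2 b.2 v, hmul2]
    rfl
  by_cases hT : ∃ t, t ∈ T
  · obtain ⟨t, ht⟩ := hT
    cases t with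
    | inl w =>
      have h1 : a.1 w * b.1 w = 1 := congrFun (congrArg Prod.fst hmul) w
      have h0 : a.1 w = 0 := by rw [ha, modelAdele_fst, if_pos ht]
      rw [h0, zero_mul] at h1
      exact zero_ne_one h1
    | inr v =>
      have h1 := hcomp v
      have h0 : a.2 v = 0 := by rw [ha, modelAdele_snd, if_pos ht]
      rw [h0, zero_mul] at h1
      exact zero_ne_one h1
  · push_neg at hT
    have hval : ∀ v : HeightOneSpectrum (𝓞 K), b.2 v ∉ v.adicCompletionIntegers K := by
      intro v
      have h1 := hcomp v
      have h0 : a.2 v = pi K v := by rw [ha, modelAdele_snd, if_neg (hT (Sum.inr v))]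
      rw [h0] at h1
      have h2 : Valued.v (pi K v) * Valued.v (b.2 v) = 1 := by
        rw [← Valuation.map_mul, h1, Valuation.map_one]
      rw [valued_pi] at h2
      have h3 : Valued.v (b.2 v) = ((Multiplicative.ofAdd (-1 : ℤ) : Multiplicative ℤ) :
          WithZero (Multiplicative ℤ))⁻¹ := eq_inv_of_mul_eq_one_right h2
      rw [notMem_adicCompletionIntegers (𝓞 K) K v, h3, ← WithZero.coe_inv, ← ofAdd_neg]
      norm_num
      exact Multiplicative.ofAdd_lt.2 (by decide)
    have hfin := Filter.eventually_cofinite.1 b.2.2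
    have : (Set.univ : Set (HeightOneSpectrum (𝓞 K))).Finite := by
      apply hfin.subset
      intro v _
      exact hval v
    exact Set.infinite_univ this


lemma unit_fst_ne_zero (u : (AdeleRing (𝓞 K) K)ˣ) (w : InfinitePlace K) :
    ((u : AdeleRing (𝓞 K) K)).1 w ≠ 0 := by
  intro h0
  have h1 : (u : AdeleRing (𝓞 K) K).1 w * ((u⁻¹ : (AdeleRing (𝓞 K) K)ˣ) : AdeleRing (𝓞 K) K).1 w = 1 :=
    congrFun (congrArg Prod.fst u.mul_inv) w
  rw [h0, zero_mul] at h1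
  exact zero_ne_one h1

lemma unit_snd_ne_zero (u : (AdeleRing (𝓞 K) K)ˣ) (v : HeightOneSpectrum (𝓞 K)) :
    ((u : AdeleRing (𝓞 K) K)).2 v ≠ 0 := by
  intro h0
  have hmul2 : (u : AdeleRing (𝓞 K) K).2 * ((u⁻¹ : (AdeleRing (𝓞 K) K)ˣ) : AdeleRing (𝓞 K) K).2 = 1 :=
    congrArg Prod.snd u.mul_inv
  have h1 : (u : AdeleRing (𝓞 K) K).2 v * ((u⁻¹ : (AdeleRing (𝓞 K) K)ˣ) : AdeleRing (𝓞 K) K).2 v = 1 := by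
    rw [← snd_apply_mul K _ _ v, hmul2]; rfl
  rw [h0, zero_mul] at h1
  exact zero_ne_one h1

lemma coord_unit_ne_zero (u : (AdeleRing (𝓞 K) K)ˣ) (v : Place K) :
    coord K (u : AdeleRing (𝓞 K) K) v ≠ 0 := by
  cases v with
  | inl w => exact unit_fst_ne_zero K u w
  | inr v => exact unit_snd_ne_zero K u v

lemma coord_isUnit_ne_zero {a : AdeleRing (𝓞 K) K} (h : IsUnit a) (v : Place K) :
    coord K a v ≠ 0 := by
  obtain ⟨u, rfl⟩ := h
  exact coord_unit_ne_zero K u v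

/-- Every idele class has a representative which is integral at every finite place. -/
lemma exists_integral_rep (c : IdeleClassGroup K) :
    ∃ u : (AdeleRing (𝓞 K) K)ˣ, QuotientGroup.mk u = c ∧
      ∀ v : HeightOneSpectrum (𝓞 K),
        ((u : AdeleRing (𝓞 K) K)).2 v ∈ v.adicCompletionIntegers K := by
  obtain ⟨u, rfl⟩ := QuotientGroup.mk_surjective c
  have hS : {v : HeightOneSpectrum (𝓞 K) |
      (u : AdeleRing (𝓞 K) K).2 v ∉ v.adicCompletionIntegers K}.Finite :=
    Filter.eventually_cofinite.1 ((u : AdeleRing (𝓞 K) K).2.2)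
  set Sfin := hS.toFinset with hSfin
  have hne : ∀ v : HeightOneSpectrum (𝓞 K), Valued.v ((u : AdeleRing (𝓞 K) K).2 v) ≠ 0 := by
    intro v h0
    exact unit_snd_ne_zero K u v ((Valuation.zero_iff _).1 h0)
  set n : HeightOneSpectrum (𝓞 K) → ℕ :=
    fun v => (Multiplicative.toAdd (WithZero.unzero (hne v))).toNat with hn
  have hbound : ∀ v : HeightOneSpectrum (𝓞 K), Valued.v ((u : AdeleRing (𝓞 K) K).2 v) ≤
      ((Multiplicative.ofAdd ((n v : ℤ)) : Multiplicative ℤ) : WithZero (Multiplicative ℤ)) := by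
    intro v
    rw [← WithZero.coe_unzero (hne v), WithZero.coe_le_coe, ← ofAdd_toAdd
      (WithZero.unzero (hne v))]
    exact Multiplicative.ofAdd_le.2 (Int.self_le_toNat _)
  set x : 𝓞 K := ∏ v ∈ Sfin, unif K v ^ (n v + 1) with hx
  have hx0 : x ≠ 0 :=
    Finset.prod_ne_zero_iff.2 fun v _ => pow_ne_zero _ (unif_ne_zero K v)
  have hfactor : ∀ w : HeightOneSpectrum (𝓞 K), ∀ v : HeightOneSpectrum (𝓞 K),
      w.intValuation (unif K v ^ (n v + 1)) ≤ 1 := by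
    intro w v
    rw [map_pow]
    exact pow_le_one' (intValuation_le_one w _) _
  have hvalx_le_one : ∀ v : HeightOneSpectrum (𝓞 K), v.intValuation x ≤ 1 :=
    fun v => intValuation_le_one v x
  have hvalx : ∀ v ∈ Sfin, v.intValuation x ≤
      ((Multiplicative.ofAdd (-(n v : ℤ) - 1) : Multiplicative ℤ) :
        WithZero (Multiplicative ℤ)) := by
    intro v hv
    rw [hx, map_prod, ← Finset.mul_prod_erase _ _ hv]
    have h2 : ∏ w ∈ Sfin.erase v, v.intValuation (unif K w ^ (n w + 1)) ≤ 1 :=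
      Finset.prod_le_one' fun w _ => hfactor v w
    have h1 : v.intValuation (unif K v ^ (n v + 1)) =
        ((Multiplicative.ofAdd (-(n v : ℤ) - 1) : Multiplicative ℤ) :
          WithZero (Multiplicative ℤ)) := by
      rw [map_pow, intValuation_unif, ← WithZero.coe_pow, WithZero.coe_inj,
        ← ofAdd_nsmul]
      congr 1
      simp
      ring
    calc v.intValuation (unif K v ^ (n v + 1)) *
          ∏ w ∈ Sfin.erase v, v.intValuation (unif K w ^ (n w + 1))
        ≤ v.intValuation (unif K v ^ (n v + 1)) := mul_le_of_le_one_right' h2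
      _ = _ := h1
  -- the principal idele
  have hxK : algebraMap (𝓞 K) K x ≠ 0 := by
    simpa using hx0
  set xU : Kˣ := Units.mk0 (algebraMap (𝓞 K) K x) hxK with hxU
  set P : (AdeleRing (𝓞 K) K)ˣ := Units.map (algebraMap K (AdeleRing (𝓞 K) K)).toMonoidHom xU with hP
  refine ⟨P * u, ?_, ?_⟩
  · have hPmem : P ∈ principalIdeles K := ⟨xU, rfl⟩
    rw [QuotientGroup.mk_mul, (QuotientGroup.eq_one_iff P).2 hPmem]
    exact one_mul (QuotientGroup.mk u : (AdeleRing (𝓞 K) K)ˣ ⧸ principalIdeles K)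
  · intro v
    have hcoeP : ((P : AdeleRing (𝓞 K) K)).2 v
        = ((algebraMap (𝓞 K) K x : K) : v.adicCompletion K) := by
      rw [hP]
      rfl
    have hcomp : ((P * u : (AdeleRing (𝓞 K) K)ˣ) : AdeleRing (𝓞 K) K).2 v
        = ((P : AdeleRing (𝓞 K) K)).2 v * ((u : AdeleRing (𝓞 K) K)).2 v := by
      rw [Units.val_mul]
      exact snd_apply_mul K _ _ v
    rw [mem_adicCompletionIntegers, hcomp, Valuation.map_mul, hcoeP,
      valuedAdicCompletion_eq_valuation', valuation_of_algebraMap]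
    by_cases hv : v ∈ Sfin
    · calc v.intValuation x * Valued.v ((u : AdeleRing (𝓞 K) K).2 v)
          ≤ ((Multiplicative.ofAdd (-(n v : ℤ) - 1) : Multiplicative ℤ) :
              WithZero (Multiplicative ℤ)) *
            ((Multiplicative.ofAdd ((n v : ℤ)) : Multiplicative ℤ) :
              WithZero (Multiplicative ℤ)) := mul_le_mul' (hvalx v hv) (hbound v)
        _ ≤ 1 := by
            rw [← WithZero.coe_mul, ← ofAdd_add]
            rw [show (-(n v : ℤ) - 1) + (n v : ℤ) = -1 by ring]
            exact le_of_lt (by exact_mod_cast Multiplicative.ofAdd_lt.2 (by decide) :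
              (((Multiplicative.ofAdd (-1 : ℤ)) : Multiplicative ℤ) :
                WithZero (Multiplicative ℤ)) < 1)
    · have hv' : ((u : AdeleRing (𝓞 K) K)).2 v ∈ v.adicCompletionIntegers K := by
        by_contra hcon
        exact hv (hSfin ▸ hS.mem_toFinset.2 hcon)
      exact mul_le_one' (hvalx_le_one v) ((mem_adicCompletionIntegers _ _ _).1 hv')


lemma isOpen_fst_ne_zero (w : InfinitePlace K) :
    IsOpen {a : AdeleRing (𝓞 K) K | a.1 w ≠ 0} := by
  have h : {a : AdeleRing (𝓞 K) K | a.1 w ≠ 0}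
      = (fun a : AdeleRing (𝓞 K) K => a.1 w) ⁻¹' {x | x ≠ (0 : w.Completion)} := rfl
  rw [h]
  exact (isOpen_ne).preimage ((continuous_apply w).comp continuous_fst)

lemma isOpen_finite_ne_zero (v : HeightOneSpectrum (𝓞 K)) :
    IsOpen {x : FiniteAdeleRing (𝓞 K) K | x v ≠ 0} := by
  exact isOpen_ne.preimage (RestrictedProduct.continuous_eval
    (R := fun v : HeightOneSpectrum (𝓞 K) => v.adicCompletion K)
    (A := fun v => (v.adicCompletionIntegers K : Set (v.adicCompletion K)))
    (𝓕 := Filter.cofinite) v)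

lemma isOpen_coord_ne_zero (v : Place K) :
    IsOpen {a : AdeleRing (𝓞 K) K | coord K a v ≠ 0} := by
  cases v with
  | inl w => exact isOpen_fst_ne_zero K w
  | inr v =>
    have h : {a : AdeleRing (𝓞 K) K | coord K a (Sum.inr v) ≠ 0}
        = Prod.snd ⁻¹' {x : FiniteAdeleRing (𝓞 K) K | x v ≠ 0} := rfl
    rw [h]
    exact (isOpen_finite_ne_zero K v).preimage continuous_snd

lemma Xi_of_not_isUnit {a : AdeleRing (𝓞 K) K} (h : ¬ IsUnit a) :
    Xi K a = Sum.inl (zeroSet K a) := dif_neg h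

lemma Xi_of_isUnit {a : AdeleRing (𝓞 K) K} (h : IsUnit a) :
    Xi K a = Sum.inr (QuotientGroup.mk h.unit) := dif_pos h

end XiHelpers

open XiHelpers in
/-- `Ξ(∏_{v∈F} K_v^* × ∏_{v∉F} O_{K,v}) = U_F ⊔ C_K`; consequently, for nonempty finite `F`,
the set `2^{Σ_K} ∖ U_F` is closed in `(2^{Σ_K} ⊔ C_K, qo)`. -/
theorem xi_image_unitsCylinder (F : Finset (Place K)) :
    Xi K '' {a : AdeleRing (𝓞 K) K | (∀ v ∈ F, coord K a v ≠ 0) ∧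
        ∀ v : Place K, v ∉ F → coord K a v ∈ localIntegers K v} =
      Sum.inl '' {T : Set (Place K) | T ∩ ↑F = ∅} ∪ Set.range Sum.inr ∧
    (F.Nonempty →
      @IsClosed _ (qoTop K) (Sum.inl '' {T : Set (Place K) | T ∩ ↑F ≠ ∅})) := by
  constructor
  · ext y
    constructor
    · rintro ⟨a, ⟨h1, _⟩, rfl⟩
      by_cases h : IsUnit a
      · exact Set.mem_union_right _ ⟨QuotientGroup.mk h.unit, (Xi_of_isUnit K h).symm⟩
      · refine Set.mem_union_left _ ⟨zeroSet K a, ?_, (Xi_of_not_isUnit K h).symm⟩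
        rw [Set.mem_setOf_eq, Set.eq_empty_iff_forall_notMem]
        rintro v ⟨hz, hF⟩
        exact h1 v (Finset.mem_coe.1 hF) hz
    · rintro (⟨T, hT, rfl⟩ | ⟨c, rfl⟩)
      · rw [Set.mem_setOf_eq] at hT
        refine ⟨modelAdele K T, ⟨?_, ?_⟩, ?_⟩
        · intro v hv
          have hvT : v ∉ T := fun hvT =>
            Set.eq_empty_iff_forall_notMem.1 hT v ⟨hvT, Finset.mem_coe.2 hv⟩
          have : v ∉ zeroSet K (modelAdele K T) := by
            rw [zeroSet_modelAdele]; exact hvT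
          exact this
        · intro v _
          cases v with
          | inl w => exact Set.mem_univ _
          | inr v =>
            show (modelAdele K T).2 v ∈ (v.adicCompletionIntegers K : Set _)
            rw [modelAdele_snd]
            split_ifs
            · exact zero_mem _
            · exact pi_mem_integers K v
        · rw [Xi_of_not_isUnit K (not_isUnit_modelAdele K T), zeroSet_modelAdele]
      · obtain ⟨u, hu, hint⟩ := exists_integral_rep K c
        have hh : IsUnit ((u : AdeleRing (𝓞 K) K)) := u.isUnit
        refine ⟨(u : AdeleRing (𝓞 K) K), ⟨fun v _ => coord_unit_ne_zero K u v, ?_⟩, ?_⟩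
        · intro v _
          cases v with
          | inl w => exact Set.mem_univ _
          | inr v => exact hint v
        · rw [Xi_of_isUnit K hh, show hh.unit = u from Units.ext hh.unit_spec, hu]
  · intro _
    have hq : (qoTop K) = TopologicalSpace.coinduced (Xi K) inferInstance := rfl
    rw [← @isOpen_compl_iff _ _ (qoTop K), hq, isOpen_coinduced]
    have hpre : Xi K ⁻¹' (Sum.inl '' {T : Set (Place K) | T ∩ ↑F ≠ ∅})ᶜ
        = ⋂ v ∈ F, {a : AdeleRing (𝓞 K) K | coord K a v ≠ 0} := by
      ext a
      simp only [Set.mem_preimage, Set.mem_compl_iff, Set.mem_iInter, Set.mem_setOf_eq]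
      by_cases h : IsUnit a
      · refine ⟨fun _ v _ => coord_isUnit_ne_zero K h v, fun _ => ?_⟩
        rw [Xi_of_isUnit K h]
        rintro ⟨T, _, hEq⟩
        exact Sum.inl_ne_inr hEq
      · rw [Xi_of_not_isUnit K h]
        constructor
        · intro hXi v hvF h0
          refine hXi ⟨zeroSet K a, ?_, rfl⟩
          rw [Set.mem_setOf_eq]
          exact Set.nonempty_iff_ne_empty.1 ⟨v, h0, Finset.mem_coe.2 hvF⟩
        · rintro hall ⟨T, hT, hEq⟩
          have hTz : T = zeroSet K a := Sum.inl.inj hEq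
          subst hTz
          refine hT ?_
          rw [Set.eq_empty_iff_forall_notMem]
          rintro v ⟨hz, hF⟩
          exact hall v (Finset.mem_coe.1 hF) hz
    rw [hpre]
    exact isOpen_biInter_finset fun v _ => isOpen_coord_ne_zero K v

end
end

section
/- For every a ∈ A_K, ‖a‖ > 0 if and only if a is invertible in A_K (i.e., a ∈ A_K^*). Consequently, A_K^ε ⊆ A_K^* for every ε > 0. -/
open NumberField IsDedekindDomain

noncomputable section

variable (K : Type*) [Field K] [NumberField K]

-- ===== auxiliary lemmas =====


lemma two_le_q (v : HeightOneSpectrum (𝓞 K)) :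
    (2:ℝ) ≤ (Nat.card (𝓞 K ⧸ v.asIdeal) : ℝ) := by
  have := Ideal.finiteQuotientOfFreeOfNeBot v.asIdeal v.ne_bot
  have := Fintype.ofFinite (𝓞 K ⧸ v.asIdeal)
  have : Nontrivial (𝓞 K ⧸ v.asIdeal) := Ideal.Quotient.nontrivial_iff.mpr v.isPrime.ne_top
  have h2 : 2 ≤ Nat.card (𝓞 K ⧸ v.asIdeal) := by
    rw [Nat.card_eq_fintype_card]; exact Fintype.one_lt_card
  exact_mod_cast h2

lemma one_lt_q (v : HeightOneSpectrum (𝓞 K)) :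
    (1:ℝ) < (Nat.card (𝓞 K ⧸ v.asIdeal) : ℝ) := by linarith [two_le_q K v]

lemma placeAbs_inr (v : HeightOneSpectrum (𝓞 K)) (x : v.adicCompletion K)
    (hx : Valued.v x ≠ (0 : WithZero (Multiplicative ℤ))) :
    placeAbs K (.inr v) x
      = (Nat.card (𝓞 K ⧸ v.asIdeal) : ℝ) ^ Multiplicative.toAdd (WithZero.unzero hx) := by
  simp only [placeAbs, dif_neg hx]

lemma placeAbs_inr_zero (v : HeightOneSpectrum (𝓞 K)) (x : v.adicCompletion K)
    (hx : Valued.v x = (0 : WithZero (Multiplicative ℤ))) :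
    placeAbs K (.inr v) x = 0 := by
  simp only [placeAbs, dif_pos hx]

open scoped Classical in
lemma placeAbs_inl (w : InfinitePlace K) (x : w.Completion) :
    placeAbs K (.inl w) x = if w.IsReal then ‖x‖ else ‖x‖ ^ 2 := rfl

lemma placeAbs_inl_nonneg (w : InfinitePlace K) (x : w.Completion) :
    0 ≤ placeAbs K (.inl w) x := by
  rw [placeAbs_inl]
  by_cases h : w.IsReal <;> simp [h, norm_nonneg, pow_two_nonneg]

lemma placeAbs_inr_nonneg (v : HeightOneSpectrum (𝓞 K)) (x : v.adicCompletion K) :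
    0 ≤ placeAbs K (.inr v) x := by
  by_cases hx : Valued.v x = (0 : WithZero (Multiplicative ℤ))
  · rw [placeAbs_inr_zero K v x hx]
  · rw [placeAbs_inr K v x hx]
    exact (zpow_pos (by linarith [two_le_q K v]) _).le

lemma placeAbs_nonneg (v : Place K) (x : LocalField K v) : 0 ≤ placeAbs K v x := by
  cases v with
  | inl w => exact placeAbs_inl_nonneg K w x
  | inr v => exact placeAbs_inr_nonneg K v x

lemma placeAbs_zero (v : Place K) : placeAbs K v (0 : LocalField K v) = 0 := by
  cases v with
  | inl w =>
    have : placeAbs K (.inl w) (0 : w.Completion) = 0 := by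
      rw [placeAbs_inl]; by_cases h : w.IsReal <;> simp [h]
    exact this
  | inr v => exact placeAbs_inr_zero K v 0 (map_zero _)

lemma placeAbs_inl_pos (w : InfinitePlace K) (x : w.Completion) (hx : x ≠ 0) :
    0 < placeAbs K (.inl w) x := by
  have h0 : (0:ℝ) < ‖x‖ := norm_pos_iff.mpr hx
  rw [placeAbs_inl]
  by_cases h : w.IsReal <;> simp [h, h0, pow_pos]

lemma placeAbs_inr_pos (v : HeightOneSpectrum (𝓞 K)) (x : v.adicCompletion K) (hx : x ≠ 0) :
    0 < placeAbs K (.inr v) x := by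
  have hv : Valued.v x ≠ (0 : WithZero (Multiplicative ℤ)) := (Valuation.ne_zero_iff _).mpr hx
  rw [placeAbs_inr K v x hv]
  exact zpow_pos (by linarith [two_le_q K v]) _

lemma placeAbs_pos {v : Place K} {x : LocalField K v} (hx : x ≠ 0) :
    0 < placeAbs K v x := by
  cases v with
  | inl w => exact placeAbs_inl_pos K w x hx
  | inr v => exact placeAbs_inr_pos K v x hx

lemma placeAbs_inr_le_one {v : HeightOneSpectrum (𝓞 K)} {x : v.adicCompletion K}
    (h : Valued.v x ≤ 1) : placeAbs K (.inr v) x ≤ 1 := by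
  by_cases hx : Valued.v x = (0 : WithZero (Multiplicative ℤ))
  · rw [placeAbs_inr_zero K v x hx]; norm_num
  · rw [placeAbs_inr K v x hx]
    have hm : Multiplicative.toAdd (WithZero.unzero hx) ≤ 0 := by
      rw [← WithZero.coe_unzero hx, ← WithZero.coe_one, WithZero.coe_le_coe] at h
      rw [← toAdd_one]
      exact Multiplicative.toAdd_le.mpr h
    calc ((Nat.card (𝓞 K ⧸ v.asIdeal) : ℝ)) ^ Multiplicative.toAdd (WithZero.unzero hx)
        ≤ _ ^ (0:ℤ) := zpow_le_zpow_right₀ (one_lt_q K v).le hm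
      _ = 1 := zpow_zero _

lemma placeAbs_inr_eq_one {v : HeightOneSpectrum (𝓞 K)} {x : v.adicCompletion K}
    (h : Valued.v x = 1) : placeAbs K (.inr v) x = 1 := by
  have hx : Valued.v x ≠ (0 : WithZero (Multiplicative ℤ)) := by
    rw [h]; exact one_ne_zero
  rw [placeAbs_inr K v x hx]
  have h1 : WithZero.unzero hx = (1 : Multiplicative ℤ) :=
    WithZero.coe_inj.mp (by rw [WithZero.coe_unzero hx, WithZero.coe_one]; exact h)
  rw [h1, toAdd_one, zpow_zero]

lemma placeAbs_inr_le_half {v : HeightOneSpectrum (𝓞 K)} {x : v.adicCompletion K}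
    (hx : x ≠ 0) (h : Valued.v x < 1) : placeAbs K (.inr v) x ≤ 1/2 := by
  have hv : Valued.v x ≠ (0 : WithZero (Multiplicative ℤ)) := (Valuation.ne_zero_iff _).mpr hx
  rw [placeAbs_inr K v x hv]
  have hm : Multiplicative.toAdd (WithZero.unzero hv) ≤ -1 := by
    have h' : (WithZero.unzero hv) < 1 := by
      rw [← WithZero.coe_lt_coe, WithZero.coe_unzero hv, WithZero.coe_one]; exact h
    have : Multiplicative.toAdd (WithZero.unzero hv) < 0 := by
      rw [← toAdd_one]; exact Multiplicative.toAdd_lt.mpr h'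
    omega
  have hq := two_le_q K v
  calc ((Nat.card (𝓞 K ⧸ v.asIdeal) : ℝ)) ^ Multiplicative.toAdd (WithZero.unzero hv)
      ≤ _ ^ (-1:ℤ) := zpow_le_zpow_right₀ (by linarith) hm
    _ = ((Nat.card (𝓞 K ⧸ v.asIdeal) : ℝ))⁻¹ := zpow_neg_one _
    _ ≤ 1/2 := by rw [one_div]; exact inv_anti₀ (by norm_num) hq

lemma coord_inl (a : AdeleRing (𝓞 K) K) (w : InfinitePlace K) :
    (coord K a (.inl w) : w.Completion) = a.1 w := rfl

lemma coord_inr (a : AdeleRing (𝓞 K) K) (v : HeightOneSpectrum (𝓞 K)) :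
    (coord K a (.inr v) : v.adicCompletion K) = a.2 v := rfl

lemma adeleAbs_nonneg (v : Place K) (a : AdeleRing (𝓞 K) K) : 0 ≤ adeleAbs K v a :=
  placeAbs_nonneg K v _

lemma S_finite (a : AdeleRing (𝓞 K) K) : {v : Place K | 1 < adeleAbs K v a}.Finite := by
  apply Set.Finite.subset ((Set.finite_range Sum.inl).union ((Filter.eventually_cofinite.mp a.2.2).image Sum.inr))
  rintro (w | v) hv
  · exact Or.inl ⟨w, rfl⟩
  · refine Or.inr ⟨v, ?_, rfl⟩
    intro hint
    have hle : Valued.v (a.2 v) ≤ 1 :=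
      (HeightOneSpectrum.mem_adicCompletionIntegers (𝓞 K) K v).mp hint
    have : adeleAbs K (.inr v) a ≤ 1 := placeAbs_inr_le_one K hle
    exact absurd hv (not_lt.mpr this)

lemma adeleAbs_inl_def (a : AdeleRing (𝓞 K) K) (w : InfinitePlace K) :
    adeleAbs K (.inl w) a = placeAbs K (.inl w) (a.1 w) := rfl

lemma adeleAbs_inr_def (a : AdeleRing (𝓞 K) K) (v : HeightOneSpectrum (𝓞 K)) :
    adeleAbs K (.inr v) a = placeAbs K (.inr v) (a.2 v) := rfl

theorem adelicNorm_pos_iff_isUnit_aux (a : AdeleRing (𝓞 K) K) : 0 < adelicNorm K a ↔ IsUnit a := by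
  classical
  set P := {r : ℝ | ∃ F : Finset (Place K),
    (∀ v : Place K, 1 < adeleAbs K v a → v ∈ F) ∧ r = ∏ v ∈ F, adeleAbs K v a} with hPdef
  have hnorm : adelicNorm K a = sInf P := rfl
  have hbdd : BddBelow P := by
    refine ⟨0, ?_⟩
    rintro r ⟨F, -, rfl⟩
    exact Finset.prod_nonneg fun v _ => adeleAbs_nonneg K v a
  have hSfin := S_finite K a
  have hne : P.Nonempty :=
    ⟨_, hSfin.toFinset, fun v hv => hSfin.mem_toFinset.mpr hv, rfl⟩
  constructor
  · -- positive norm implies unit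
    intro hpos
    rw [hnorm] at hpos
    obtain ⟨r0, F0, hF0S, hr0⟩ := hne
    -- all coordinates are nonzero
    have hcoord : ∀ v : Place K, coord K a v ≠ 0 := by
      intro v hv0
      have habs : adeleAbs K v a = 0 := by
        rw [adeleAbs, hv0, placeAbs_zero]
      have hmem : (0:ℝ) ∈ P := by
        refine ⟨insert v F0, fun u hu => Finset.mem_insert_of_mem (hF0S u hu), ?_⟩
        exact (Finset.prod_eq_zero (Finset.mem_insert_self v F0) habs).symm
      have := csInf_le hbdd hmem
      linarith
    -- the set of finite places with |a|_v < 1 is finite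
    have hT : {v : HeightOneSpectrum (𝓞 K) | Valued.v (a.2 v) < 1}.Finite := by
      by_contra hinf
      have hinf' : {v : HeightOneSpectrum (𝓞 K) | Valued.v (a.2 v) < 1}.Infinite := hinf
      set B := ∏ v ∈ F0, adeleAbs K v a with hB
      have hBmem : B ∈ P := ⟨F0, hF0S, rfl⟩
      have hBpos : 0 < B := lt_of_lt_of_le hpos (csInf_le hbdd hBmem)
      obtain ⟨n, hn⟩ : ∃ n : ℕ, (1/2 : ℝ) ^ n < sInf P / B :=
        exists_pow_lt_of_lt_one (div_pos hpos hBpos) (by norm_num)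
      have hn' : B * (1/2:ℝ) ^ n < sInf P := by
        rw [lt_div_iff₀ hBpos] at hn; linarith [hn]
      have hpre : (Sum.inr ⁻¹' (↑F0 : Set (Place K)) :
          Set (HeightOneSpectrum (𝓞 K))).Finite :=
        Set.Finite.preimage Sum.inr_injective.injOn F0.finite_toSet
      obtain ⟨G, hGsub, hGcard⟩ := (hinf'.diff hpre).exists_subset_card_eq n
      have hdisj : Disjoint F0 (G.image Sum.inr) := by
        rw [Finset.disjoint_right]
        intro x hx
        obtain ⟨u, hu, rfl⟩ := Finset.mem_image.mp hx
        exact fun hmem => (hGsub hu).2 hmem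
      have hGhalf : ∀ u ∈ G, adeleAbs K (.inr u) a ≤ 1/2 := by
        intro u hu
        have hlt : Valued.v (a.2 u) < 1 := (hGsub hu).1
        have hne0 : a.2 u ≠ 0 := hcoord (Sum.inr u)
        rw [adeleAbs_inr_def]
        exact placeAbs_inr_le_half K hne0 hlt
      have hmemF : (∏ v ∈ F0 ∪ G.image Sum.inr, adeleAbs K v a) ∈ P :=
        ⟨F0 ∪ G.image Sum.inr, fun u hu => Finset.mem_union_left _ (hF0S u hu), rfl⟩
      have hprod : ∏ v ∈ F0 ∪ G.image Sum.inr, adeleAbs K v a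
          = B * ∏ v ∈ G.image Sum.inr, adeleAbs K v a := by
        rw [Finset.prod_union hdisj]
      have himg : ∏ v ∈ G.image Sum.inr, adeleAbs K v a
          = ∏ u ∈ G, adeleAbs K (.inr u) a :=
        Finset.prod_image (fun x _ y _ h => Sum.inr_injective h)
      have hle : ∏ u ∈ G, adeleAbs K (.inr u) a ≤ (1/2:ℝ) ^ n := by
        calc ∏ u ∈ G, adeleAbs K (.inr u) a
            ≤ ∏ u ∈ G, (1/2:ℝ) :=
              Finset.prod_le_prod (fun u _ => adeleAbs_nonneg K _ a) hGhalf
          _ = (1/2:ℝ) ^ G.card := by rw [Finset.prod_const]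
          _ = (1/2:ℝ) ^ n := by rw [hGcard]
      have hsmall : ∏ v ∈ F0 ∪ G.image Sum.inr, adeleAbs K v a ≤ B * (1/2:ℝ)^n := by
        rw [hprod, himg]
        exact mul_le_mul_of_nonneg_left hle hBpos.le
      have := csInf_le hbdd hmemF
      linarith
    -- construct the inverse
    have hainf : ∀ w : InfinitePlace K, a.1 w ≠ 0 := fun w => hcoord (Sum.inl w)
    have hafin : ∀ v : HeightOneSpectrum (𝓞 K), a.2 v ≠ 0 := fun v => hcoord (Sum.inr v)
    have hbfin : ∀ᶠ v in Filter.cofinite,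
        ((a.2 v)⁻¹ : v.adicCompletion K) ∈ (v.adicCompletionIntegers K : Set _) := by
      rw [Filter.eventually_cofinite]
      refine Set.Finite.subset hT ?_
      intro v hv
      simp only [Set.mem_setOf_eq] at hv ⊢
      by_contra hge
      push_neg at hge
      apply hv
      rw [SetLike.mem_coe, HeightOneSpectrum.mem_adicCompletionIntegers, map_inv₀]
      exact inv_le_one_of_one_le₀ hge
    refine IsUnit.of_mul_eq_one (a := a)
      ⟨fun w => (a.1 w)⁻¹, ⟨fun v => (a.2 v)⁻¹, hbfin⟩⟩ ?_
    refine Prod.ext ?_ (Subtype.ext ?_)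
    · funext w
      exact mul_inv_cancel₀ (hainf w)
    · funext v
      exact mul_inv_cancel₀ (hafin v)
  · -- unit implies positive norm
    intro hu
    obtain ⟨b, hab⟩ := hu.exists_right_inv
    have hinfmul : ∀ w : InfinitePlace K, a.1 w * b.1 w = 1 := by
      intro w
      have : (a * b).1 w = (1 : AdeleRing (𝓞 K) K).1 w := by rw [hab]
      exact this
    have hfinmul : ∀ v : HeightOneSpectrum (𝓞 K), a.2 v * b.2 v = 1 := by
      intro v
      have : (a * b).2 v = (1 : AdeleRing (𝓞 K) K).2 v := by rw [hab]
      exact this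
    have hcoord : ∀ v : Place K, coord K a v ≠ 0 := by
      rintro (w | v)
      · exact left_ne_zero_of_mul_eq_one (hinfmul w)
      · exact left_ne_zero_of_mul_eq_one (hfinmul v)
    -- the set of places with |a|_v ≠ 1 is finite
    have hfa : {v : HeightOneSpectrum (𝓞 K) | a.2 v ∉ v.adicCompletionIntegers K}.Finite :=
      a.2.2
    have hfb : {v : HeightOneSpectrum (𝓞 K) | b.2 v ∉ v.adicCompletionIntegers K}.Finite :=
      b.2.2
    have hT : {v : Place K | adeleAbs K v a ≠ 1}.Finite := by
      apply Set.Finite.subset ((Set.finite_range Sum.inl).union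
        ((hfa.union hfb).image Sum.inr))
      rintro (w | v) hv
      · exact Or.inl ⟨w, rfl⟩
      · refine Or.inr ⟨v, ?_, rfl⟩
        simp only [Set.mem_setOf_eq] at hv
        by_contra hint
        simp only [Set.mem_union, Set.mem_setOf_eq, not_or, not_not] at hint
        obtain ⟨ha1, hb1⟩ := hint
        rw [HeightOneSpectrum.mem_adicCompletionIntegers] at ha1 hb1
        have hmul : Valued.v (a.2 v) * Valued.v (b.2 v) = 1 := by
          rw [← map_mul, hfinmul v, map_one]
        have hone : Valued.v (a.2 v) = 1 := by
          refine le_antisymm ha1 ?_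
          calc (1 : WithZero (Multiplicative ℤ)) = Valued.v (a.2 v) * Valued.v (b.2 v) :=
                hmul.symm
            _ ≤ Valued.v (a.2 v) * 1 := mul_le_mul_right hb1 _
            _ = Valued.v (a.2 v) := mul_one _
        exact hv (by rw [adeleAbs_inr_def]; exact placeAbs_inr_eq_one K hone)
    set T' := hT.toFinset with hT'
    set c := ∏ v ∈ T', min (adeleAbs K v a) 1 with hc
    have hcpos : 0 < c :=
      Finset.prod_pos fun v _ => lt_min (placeAbs_pos K (hcoord v)) one_pos
    rw [hnorm]
    refine lt_of_lt_of_le hcpos (le_csInf hne ?_)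
    rintro r ⟨F, hFS, rfl⟩
    have h1 : ∀ v ∈ F ∪ T', v ∉ T' → min (adeleAbs K v a) 1 = 1 := by
      intro v _ hv
      have : adeleAbs K v a = 1 := by
        by_contra h
        exact hv (hT.mem_toFinset.mpr h)
      rw [this, min_self]
    calc c = ∏ v ∈ F ∪ T', min (adeleAbs K v a) 1 :=
          Finset.prod_subset Finset.subset_union_right h1
      _ = (∏ v ∈ F, min (adeleAbs K v a) 1) * ∏ v ∈ T' \ F, min (adeleAbs K v a) 1 := by
          rw [← Finset.union_sdiff_self_eq_union, Finset.prod_union Finset.disjoint_sdiff]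
      _ ≤ (∏ v ∈ F, min (adeleAbs K v a) 1) * 1 := by
          refine mul_le_mul_of_nonneg_left ?_
            (Finset.prod_nonneg fun v _ => le_min (adeleAbs_nonneg K v a) zero_le_one)
          exact Finset.prod_le_one (fun v _ => le_min (adeleAbs_nonneg K v a) zero_le_one)
            (fun v _ => min_le_right _ _)
      _ = ∏ v ∈ F, min (adeleAbs K v a) 1 := mul_one _
      _ ≤ ∏ v ∈ F, adeleAbs K v a :=
          Finset.prod_le_prod (fun v _ => le_min (adeleAbs_nonneg K v a) zero_le_one)
            (fun v _ => min_le_left _ _)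


/-- For every `a ∈ A_K`, `‖a‖ > 0` iff `a` is invertible in `A_K`; consequently
`A_K^ε ⊆ A_K^*` for every `ε > 0`. -/
theorem adelicNorm_pos_iff_isUnit :
    (∀ a : AdeleRing (𝓞 K) K, 0 < adelicNorm K a ↔ IsUnit a) ∧
    ∀ ε : ℝ, 0 < ε →
      {a : AdeleRing (𝓞 K) K | ε ≤ adelicNorm K a} ⊆ {a : AdeleRing (𝓞 K) K | IsUnit a} := by
  refine ⟨adelicNorm_pos_iff_isUnit_aux K, ?_⟩
  intro ε hε a ha
  exact (adelicNorm_pos_iff_isUnit_aux K a).mp (lt_of_lt_of_le hε ha)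

end
end

section
/- Define Υ : 2^{Σ_K} ⊔ C_K → 2^{Σ_K} by Υ(T) := T for T ∈ 2^{Σ_K} and Υ(a) := ∅ for a ∈ C_K. Then Υ is continuous and open as a map from (2^{Σ_K} ⊔ C_K, qo) to (2^{Σ_K}, power-cofinite topology). -/
open NumberField IsDedekindDomain

noncomputable section

variable (K : Type*) [Field K] [NumberField K]

section Aux

open IsDedekindDomain.HeightOneSpectrum
open scoped RestrictedProduct

variable {K}

lemma not_isUnit_natCast_prime [NumberField K] {p : ℕ} (hp : p.Prime) :
    ¬ IsUnit ((p : 𝓞 K)) := by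
  intro h
  rw [NumberField.isUnit_iff_norm] at h
  have h1 : ((RingOfIntegers.norm ℚ (p : 𝓞 K) : 𝓞 ℚ) : ℚ)
      = (p : ℚ) ^ Module.finrank ℚ K := by
    rw [RingOfIntegers.coe_norm]
    have : ((p : 𝓞 K) : K) = algebraMap ℚ K (p : ℚ) := by push_cast; simp
    rw [this, Algebra.norm_algebraMap]
  rw [h1] at h
  have hp2 : (2 : ℚ) ≤ (p : ℚ) := by exact_mod_cast hp.two_le
  have hn : 1 < (p : ℚ) ^ Module.finrank ℚ K :=
    one_lt_pow₀ (lt_of_lt_of_le one_lt_two hp2) Module.finrank_pos.ne'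
  rw [abs_of_nonneg (by positivity)] at h
  exact absurd h hn.ne'

instance [NumberField K] : Infinite (IsDedekindDomain.HeightOneSpectrum (𝓞 K)) := by
  have key : ∀ p : {p : ℕ // p.Prime},
      ∃ v : IsDedekindDomain.HeightOneSpectrum (𝓞 K), ((p : ℕ) : 𝓞 K) ∈ v.asIdeal := by
    rintro ⟨p, hp⟩
    have h1 : Ideal.span {((p : ℕ) : 𝓞 K)} ≠ ⊤ := by
      rw [Ne, Ideal.span_singleton_eq_top]
      exact not_isUnit_natCast_prime hp
    obtain ⟨M, hM, hle⟩ := Ideal.exists_le_maximal _ h1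
    have hbot : M ≠ ⊥ := by
      intro hbot
      have : ((p : ℕ) : 𝓞 K) = 0 := by
        simpa [hbot] using hle (Ideal.subset_span (Set.mem_singleton _))
      exact (Nat.cast_ne_zero.mpr hp.ne_zero) this
    exact ⟨⟨M, hM.isPrime, hbot⟩, hle (Ideal.subset_span (Set.mem_singleton _))⟩
  choose f hf using key
  haveI : Infinite {p : ℕ // p.Prime} := Nat.infinite_setOf_prime.to_subtype
  refine Infinite.of_injective f ?_
  rintro p q hpq
  by_contra hne
  have hco : IsCoprime ((p : ℕ) : 𝓞 K) ((q : ℕ) : 𝓞 K) := by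
    have h1 : Nat.Coprime p q :=
      (Nat.coprime_primes p.2 q.2).mpr (fun h => hne (Subtype.ext h))
    have h2 := (Nat.isCoprime_iff_coprime).mpr h1
    have h3 := h2.map (algebraMap ℤ (𝓞 K))
    simpa using h3
  obtain ⟨a, b, hab⟩ := hco
  have h1 : (1 : 𝓞 K) ∈ (f p).asIdeal := by
    rw [← hab]
    exact Ideal.add_mem _ (Ideal.mul_mem_left _ _ (hf p))
      (Ideal.mul_mem_left _ _ (hpq ▸ hf q))
  exact (f p).isPrime.ne_top (Ideal.eq_top_of_unit_mem _ _ 1 h1 (mul_one 1))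

variable (R : Type*) [CommRing R] [IsDedekindDomain R] (F : Type*) [Field F]
  [Algebra R F] [IsFractionRing R F]

lemma finite_intValuation_ne_one {r : R} (hr : r ≠ 0) :
    {v : IsDedekindDomain.HeightOneSpectrum R | v.intValuationDef r ≠ 1}.Finite := by
  refine (Ideal.finite_factors (I := Ideal.span {r}) ?_).subset ?_
  · simpa only [Submodule.zero_eq_bot, ne_eq, Ideal.span_singleton_eq_bot]
  · intro v hv
    rw [Set.mem_setOf_eq, ← intValuation_lt_one_iff_dvd]
    exact lt_of_le_of_ne (v.intValuation_le_one r) hv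

lemma exists_ofAdd_neg_lt (g : WithZero (Multiplicative ℤ)) (hg : g ≠ 0) :
    ∃ m : ℕ, (Multiplicative.ofAdd (-(m : ℤ)) : Multiplicative ℤ) < g := by
  obtain ⟨u, rfl⟩ := WithZero.ne_zero_iff_exists.mp hg
  refine ⟨(1 - Multiplicative.toAdd u).toNat, ?_⟩
  rw [WithZero.coe_lt_coe]
  have h1 : (-(((1 - Multiplicative.toAdd u).toNat : ℤ))) < Multiplicative.toAdd u := by
    have := Int.self_le_toNat (1 - Multiplicative.toAdd u); omega
  calc Multiplicative.ofAdd (-(((1 - Multiplicative.toAdd u).toNat : ℤ)))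
      < Multiplicative.ofAdd (Multiplicative.toAdd u) := Multiplicative.ofAdd_lt.mpr h1
    _ = u := ofAdd_toAdd u

end Aux
section Aux2

open IsDedekindDomain.HeightOneSpectrum
open scoped RestrictedProduct

variable {K}

section Gen

variable (R : Type*) [CommRing R] [IsDedekindDomain R] (F : Type*) [Field F]
  [Algebra R F] [IsFractionRing R F]

lemma val_component_algebraMap (r : R) (v : IsDedekindDomain.HeightOneSpectrum R) :
    Valued.v (((algebraMap R (FiniteAdeleRing R F) r) : FiniteAdeleRing R F).1 v)
      = v.intValuationDef r := by
  have h1 : ((algebraMap R (FiniteAdeleRing R F) r)).1 v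
      = ((algebraMap R F r : F) : v.adicCompletion F) := rfl
  rw [h1, IsDedekindDomain.HeightOneSpectrum.valuedAdicCompletion_eq_valuation',
    IsDedekindDomain.HeightOneSpectrum.valuation_of_algebraMap]
  rfl

lemma continuous_finiteAdeleRing_proj (v : IsDedekindDomain.HeightOneSpectrum R) :
    Continuous (fun x : FiniteAdeleRing R F => x.1 v) := by
  exact (continuous_apply v).comp (RestrictedProduct.continuous_coe
    (R := fun v : IsDedekindDomain.HeightOneSpectrum R => v.adicCompletion F)
    (A := fun v => (v.adicCompletionIntegers F : Set (v.adicCompletion F)))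
    (𝓕 := Filter.cofinite))

end Gen

end Aux2
section Aux3

open IsDedekindDomain.HeightOneSpectrum
open scoped RestrictedProduct

variable {K}

set_option synthInstance.maxHeartbeats 1000000 in
instance [NumberField K] : ∀ p : Place K, T1Space (LocalField K p)
  | .inl w => inferInstanceAs (T1Space w.Completion)
  | .inr v => inferInstanceAs (T1Space (v.adicCompletion K))

variable [NumberField K]

lemma continuous_coord (p : Place K) : Continuous (fun a : AdeleRing (𝓞 K) K => coord K a p) := by
  cases p with
  | inl w =>
    show Continuous (fun a : AdeleRing (𝓞 K) K => a.1 w)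
    exact (continuous_apply w).comp continuous_fst
  | inr v =>
    show Continuous (fun a : AdeleRing (𝓞 K) K => a.2.1 v)
    exact (continuous_finiteAdeleRing_proj (𝓞 K) K v).comp continuous_snd

lemma not_isUnit_of_val_lt_one (b : AdeleRing (𝓞 K) K)
    (S : Set (IsDedekindDomain.HeightOneSpectrum (𝓞 K))) (hS : S.Finite)
    (h : ∀ v ∉ S, Valued.v (b.2.1 v) < 1) : ¬ IsUnit b := by
  rintro ⟨u, rfl⟩
  have h1 : u.val * u.inv = 1 := u.val_inv
  have hcomp : ∀ v : IsDedekindDomain.HeightOneSpectrum (𝓞 K),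
      (u.val.2.1 v) * (u.inv.2.1 v) = 1 :=
    fun v => congrFun (congrArg (fun x : AdeleRing (𝓞 K) K => x.2.1) h1) v
  have hfin : {v | u.inv.2.1 v ∉ v.adicCompletionIntegers K}.Finite :=
    Filter.eventually_cofinite.mp u.inv.2.2
  have hsub : Set.univ ⊆ S ∪ {v | u.inv.2.1 v ∉ v.adicCompletionIntegers K} := by
    intro v _
    by_cases hv : v ∈ S
    · exact Or.inl hv
    refine Or.inr ?_
    have hlt := h v hv
    have hmul := congrArg Valued.v (hcomp v)
    rw [Valued.v.map_mul, map_one] at hmul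
    rw [Set.mem_setOf_eq, IsDedekindDomain.HeightOneSpectrum.mem_adicCompletionIntegers]
    intro hle
    have : Valued.v (u.val.2.1 v) * Valued.v (u.inv.2.1 v) < 1 := by
      calc Valued.v (u.val.2.1 v) * Valued.v (u.inv.2.1 v)
          ≤ Valued.v (u.val.2.1 v) * 1 := mul_le_mul_right hle _
        _ = Valued.v (u.val.2.1 v) := mul_one _
        _ < 1 := hlt
    rw [hmul] at this
    exact lt_irrefl _ this
  exact Set.infinite_univ ((hS.union hfin).subset hsub)

lemma exists_ne_zero_mem_nhds_zero (w : NumberField.InfinitePlace K)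
    {W : Set w.Completion} (hW : W ∈ nhds (0 : w.Completion)) :
    ∃ x : w.Completion, x ≠ 0 ∧ x ∈ W := by
  obtain ⟨ε, hε, hball⟩ := Metric.mem_nhds_iff.mp hW
  have h2 : ‖((2 : WithAbs w.1) : w.Completion)‖ = 2 := by
    rw [NumberField.InfinitePlace.Completion.norm_coe]
    show w (2 : K) = 2
    rw [← NumberField.InfinitePlace.norm_embedding_eq w (2 : K), map_ofNat]
    simp
  obtain ⟨n, hn⟩ := exists_pow_lt_of_lt_one hε (by norm_num : (2 : ℝ)⁻¹ < 1)
  have hb0 : ((2 : WithAbs w.1) : w.Completion) ≠ 0 := by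
    intro h
    rw [h, norm_zero] at h2
    norm_num at h2
  refine ⟨(((2 : WithAbs w.1) : w.Completion))⁻¹ ^ n, ?_, ?_⟩
  · exact pow_ne_zero _ (inv_ne_zero hb0)
  · apply hball
    rw [Metric.mem_ball, dist_zero_right, norm_pow, norm_inv, h2]
    exact hn

lemma zeroSet_eq_empty_of_isUnit {a : AdeleRing (𝓞 K) K} (h : IsUnit a) :
    zeroSet K a = ∅ := by
  obtain ⟨u, rfl⟩ := h
  have h1 : u.val * u.inv = 1 := u.val_inv
  ext p
  simp only [zeroSet, Set.mem_setOf_eq, Set.mem_empty_iff_false, iff_false]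
  cases p with
  | inl w =>
    show u.val.1 w ≠ 0
    have : u.val.1 w * u.inv.1 w = 1 :=
      congrFun (congrArg (fun x : AdeleRing (𝓞 K) K => x.1) h1) w
    exact left_ne_zero_of_mul_eq_one this
  | inr v =>
    show u.val.2.1 v ≠ 0
    have : u.val.2.1 v * u.inv.2.1 v = 1 :=
      congrFun (congrArg (fun x : AdeleRing (𝓞 K) K => x.2.1) h1) v
    exact left_ne_zero_of_mul_eq_one this

end Aux3
section Aux4

open IsDedekindDomain.HeightOneSpectrum
open scoped RestrictedProduct

variable {K} [NumberField K]

lemma continuous_zeroSet : @Continuous _ _ _ (pcTop K) (zeroSet K) := by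
  rw [pcTop]
  rw [continuous_generateFrom_iff]
  rintro S ⟨F, rfl⟩
  have hpre : zeroSet K ⁻¹' {T : Set (Place K) | ∀ v ∈ F, v ∉ T}
      = ⋂ p ∈ F, {a : AdeleRing (𝓞 K) K | coord K a p ≠ 0} := by
    ext a
    simp [zeroSet]
  rw [hpre]
  exact isOpen_biInter_finset fun p _ =>
    (isOpen_compl_singleton (x := (0 : LocalField K p))).preimage (continuous_coord p)

lemma upsilon_comp_xi :
    (Sum.elim id fun _ : IdeleClassGroup K => (∅ : Set (Place K))) ∘ Xi K = zeroSet K := by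
  funext a
  by_cases h : IsUnit a
  · simp only [Function.comp_apply, Xi, dif_pos h, Sum.elim_inr]
    exact (zeroSet_eq_empty_of_isUnit h).symm
  · simp only [Function.comp_apply, Xi, dif_neg h, Sum.elim_inl, id]

lemma pc_isOpen_of_forall (S : Set (Set (Place K)))
    (h : ∀ T ∈ S, ∃ F : Finset (Place K), (∀ p ∈ F, p ∉ T) ∧
      ∀ T' : Set (Place K), (∀ p ∈ F, p ∉ T') → T' ∈ S) :
    @IsOpen _ (pcTop K) S := by
  have hS : S = ⋃₀ {G | (∃ F : Finset (Place K), G = {T : Set (Place K) | ∀ v ∈ F, v ∉ T})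
      ∧ G ⊆ S} := by
    ext T
    constructor
    · intro hT
      obtain ⟨F, h1, h2⟩ := h T hT
      exact ⟨{T' | ∀ v ∈ F, v ∉ T'}, ⟨⟨F, rfl⟩, fun T' hT' => h2 T' hT'⟩, h1⟩
    · rintro ⟨G, ⟨_, hGS⟩, hTG⟩
      exact hGS hTG
  rw [hS]
  letI := pcTop K
  exact isOpen_sUnion fun G hG => TopologicalSpace.isOpen_generateFrom_of_mem hG.1

end Aux4
section Aux5

open IsDedekindDomain.HeightOneSpectrum
open scoped RestrictedProduct

variable {K} [NumberField K]

lemma val_algebraMap_ringOfIntegers (v : IsDedekindDomain.HeightOneSpectrum (𝓞 K)) (x : 𝓞 K) :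
    Valued.v (algebraMap (𝓞 K) (v.adicCompletion K) x) = v.intValuationDef x := by
  rw [show algebraMap (𝓞 K) (v.adicCompletion K) x
      = ((algebraMap (𝓞 K) K x : K) : v.adicCompletion K) from rfl,
    IsDedekindDomain.HeightOneSpectrum.valuedAdicCompletion_eq_valuation',
    IsDedekindDomain.HeightOneSpectrum.valuation_of_algebraMap]
  rfl

lemma val_algebraMap_field (v : IsDedekindDomain.HeightOneSpectrum (𝓞 K)) (k : K) :
    Valued.v (algebraMap K (v.adicCompletion K) k) = v.valuation K k := by
  rw [IsDedekindDomain.HeightOneSpectrum.algebraMap_adicCompletion]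
  exact IsDedekindDomain.HeightOneSpectrum.valuedAdicCompletion_eq_valuation' v k

lemma ne_zero_of_val_ne_zero {v : IsDedekindDomain.HeightOneSpectrum (𝓞 K)}
    {x : v.adicCompletion K} (h : Valued.v x ≠ 0) : x ≠ 0 := by
  intro h0; rw [h0, map_zero] at h; exact h rfl

lemma exists_ne_zero_mem_nhds_zero_adic (v : IsDedekindDomain.HeightOneSpectrum (𝓞 K))
    {U : Set (v.adicCompletion K)} (hU : U ∈ nhds (0 : v.adicCompletion K)) :
    ∃ x : v.adicCompletion K, x ≠ 0 ∧ x ∈ U := by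
  obtain ⟨γ, hγ⟩ := Valued.mem_nhds_zero.mp hU
  have he : MonoidWithZeroHom.ValueGroup₀.embedding γ.1 ≠ 0 := by
    intro h
    apply γ.ne_zero
    apply MonoidWithZeroHom.ValueGroup₀.embedding_injective
    rw [h, map_zero]
  obtain ⟨π, hπ⟩ := v.intValuation_exists_uniformizer
  obtain ⟨m, hm⟩ := exists_ofAdd_neg_lt _ he
  have hxv : Valued.v ((algebraMap (𝓞 K) (v.adicCompletion K) π) ^ m)
      = ((Multiplicative.ofAdd (-(m : ℤ)) : Multiplicative ℤ) : WithZero (Multiplicative ℤ)) := by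
    rw [map_pow, val_algebraMap_ringOfIntegers, ← IsDedekindDomain.HeightOneSpectrum.intValuation_apply,
      hπ, WithZero.exp, ← WithZero.coe_pow, ← ofAdd_nsmul]
    congr 1
    simp
  refine ⟨(algebraMap (𝓞 K) (v.adicCompletion K) π) ^ m, ?_, ?_⟩
  · apply ne_zero_of_val_ne_zero
    rw [hxv]
    exact WithZero.coe_ne_zero
  · apply hγ
    show Valued.v.restrict _ < γ.1
    rw [Valuation.restrict_lt_iff_lt_embedding, hxv]
    exact hm

lemma key_construction (V : Set (AdeleRing (𝓞 K) K)) (hV : IsOpen V) (a : AdeleRing (𝓞 K) K)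
    (ha : a ∈ V) :
    ∃ F : Finset (Place K), ∀ T : Set (Place K), (∀ p ∈ F, p ∈ T → coord K a p = 0) →
      ∃ b ∈ V, ¬ IsUnit b ∧ zeroSet K b = T := by
  classical
  have hVa : V ∈ nhds a := hV.mem_nhds ha
  rw [show (nhds a) = nhds (a.1, a.2) from rfl, nhds_prod_eq] at hVa
  obtain ⟨V₁, hV₁, V₂, hV₂, hV12⟩ := Filter.mem_prod_iff.mp hVa
  have hV₁'' : ∀ U : Set (∀ w : NumberField.InfinitePlace K, w.Completion),
      U ∈ nhds (fun w : NumberField.InfinitePlace K => a.1 w) →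
        U ∈ Filter.pi (fun w => nhds (a.1 w)) := fun U hU => by rwa [nhds_pi] at hU
  obtain ⟨I, hIfin, t, ht, htV⟩ := Filter.mem_pi.mp (hV₁'' V₁ hV₁)
  -- the finite part
  set S : Set (IsDedekindDomain.HeightOneSpectrum (𝓞 K)) :=
    {v | a.2 v ∉ v.adicCompletionIntegers K} with hSdef
  have hSfin : S.Finite := Filter.eventually_cofinite.mp a.2.2
  have hAopen : ∀ v : IsDedekindDomain.HeightOneSpectrum (𝓞 K),
      IsOpen (v.adicCompletionIntegers K : Set (v.adicCompletion K)) :=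
    fun v => Valued.isOpen_valuationSubring _
  have hScof : (Filter.cofinite : Filter (IsDedekindDomain.HeightOneSpectrum (𝓞 K)))
      ≤ Filter.principal Sᶜ := by
    rw [Filter.le_principal_iff, Filter.mem_cofinite, compl_compl]
    exact hSfin
  let x2 : Πʳ v : IsDedekindDomain.HeightOneSpectrum (𝓞 K),
      [v.adicCompletion K, v.adicCompletionIntegers K]_[Filter.principal Sᶜ] :=
    ⟨fun v => a.2 v, Filter.eventually_principal.mpr (fun v hv => not_not.mp hv)⟩
  have hV₂' : V₂ ∈ Filter.map (RestrictedProduct.inclusion _ _ hScof) (nhds x2) := by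
    rw [← RestrictedProduct.nhds_eq_map_inclusion hAopen hScof x2]
    exact hV₂
  rw [RestrictedProduct.isEmbedding_coe_of_principal.nhds_eq_comap] at hV₂'
  obtain ⟨W, hW, hWsub⟩ := Filter.mem_comap.mp (Filter.mem_map.mp hV₂')
  rw [nhds_pi, Filter.mem_pi] at hW
  obtain ⟨J, hJfin, t', ht', htW⟩ := hW
  choose π hπ using fun v : IsDedekindDomain.HeightOneSpectrum (𝓞 K) =>
    v.intValuation_exists_uniformizer
  have hπK : ∀ v : IsDedekindDomain.HeightOneSpectrum (𝓞 K),
      Valued.v (algebraMap K (v.adicCompletion K) (algebraMap (𝓞 K) K (π v)))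
        = ((Multiplicative.ofAdd (-1 : ℤ) : Multiplicative ℤ) : WithZero (Multiplicative ℤ)) := by
    intro v
    rw [val_algebraMap_field, IsDedekindDomain.HeightOneSpectrum.valuation_of_algebraMap]
    exact hπ v
  have hπvne : ∀ v : IsDedekindDomain.HeightOneSpectrum (𝓞 K),
      algebraMap K (v.adicCompletion K) (algebraMap (𝓞 K) K (π v)) ≠ 0 := by
    intro v
    apply ne_zero_of_val_ne_zero
    rw [hπK v]
    exact WithZero.coe_ne_zero
  have hofAdd_lt : ((Multiplicative.ofAdd (-1 : ℤ) : Multiplicative ℤ) :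
      WithZero (Multiplicative ℤ)) < 1 := by
    rw [← WithZero.coe_one, WithZero.coe_lt_coe]
    rw [show (1 : Multiplicative ℤ) = Multiplicative.ofAdd (0 : ℤ) from rfl]
    exact Multiplicative.ofAdd_lt.mpr (by norm_num)
  set S' := S ∪ J with hS'def
  have hS'fin : S'.Finite := hSfin.union hJfin
  refine ⟨(Finset.univ.image Sum.inl) ∪ hS'fin.toFinset.image Sum.inr, ?_⟩
  intro T hT
  have hTinl : ∀ w : NumberField.InfinitePlace K, Sum.inl w ∈ T → a.1 w = 0 := by
    intro w hw
    exact hT _ (Finset.mem_union_left _ (Finset.mem_image_of_mem _ (Finset.mem_univ w))) hw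
  have hTinr : ∀ v ∈ S', Sum.inr v ∈ T → a.2 v = 0 := by
    intro v hv hvT
    exact hT _ (Finset.mem_union_right _
      (Finset.mem_image_of_mem _ (hS'fin.mem_toFinset.mpr hv))) hvT
  -- selection of nonzero small elements at infinite places
  have hsel' : ∀ w : NumberField.InfinitePlace K,
      ∃ x : w.Completion, a.1 w = 0 → (x ≠ 0 ∧ x ∈ t w) := by
    intro w
    by_cases h0 : a.1 w = 0
    · obtain ⟨x, hx0, hxt⟩ := exists_ne_zero_mem_nhds_zero w (h0 ▸ ht w)
      exact ⟨x, fun _ => ⟨hx0, hxt⟩⟩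
    · exact ⟨1, fun h => absurd h h0⟩
  choose sel hsel using hsel'
  -- selection of nonzero small integral elements at finite places
  have hsel2' : ∀ v : IsDedekindDomain.HeightOneSpectrum (𝓞 K), ∃ y : v.adicCompletion K,
      a.2 v = 0 → (y ≠ 0 ∧ y ∈ t' v ∧ y ∈ v.adicCompletionIntegers K) := by
    intro v
    by_cases h0 : a.2 v = 0
    · have hmem : t' v ∩ (v.adicCompletionIntegers K : Set (v.adicCompletion K))
          ∈ nhds (0 : v.adicCompletion K) := by
        rw [← h0]
        exact Filter.inter_mem (ht' v) ((hAopen v).mem_nhds (by rw [h0]; exact zero_mem _))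
      obtain ⟨y, hy0, hyt, hyO⟩ := exists_ne_zero_mem_nhds_zero_adic v hmem
      exact ⟨y, fun _ => ⟨hy0, hyt, hyO⟩⟩
    · exact ⟨1, fun h => absurd h h0⟩
  choose sel2 hsel2 using hsel2'
  -- the components of b
  set binf : NumberField.InfiniteAdeleRing K := fun w =>
    if Sum.inl w ∈ T then 0 else if a.1 w = 0 then sel w else a.1 w with hbinfdef
  set bfin : ∀ v : IsDedekindDomain.HeightOneSpectrum (𝓞 K), v.adicCompletion K := fun v =>
    if Sum.inr v ∈ T then 0
    else if v ∈ S' then (if a.2 v = 0 then sel2 v else a.2 v)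
    else algebraMap K (v.adicCompletion K) (algebraMap (𝓞 K) K (π v)) with hbfindef
  have hbfin_int : ∀ v ∉ S, bfin v ∈ v.adicCompletionIntegers K := by
    intro v hv
    simp only [hbfindef]
    by_cases hvT : Sum.inr v ∈ T
    · rw [if_pos hvT]; exact zero_mem _
    · rw [if_neg hvT]
      by_cases hvS' : v ∈ S'
      · rw [if_pos hvS']
        by_cases h0 : a.2 v = 0
        · rw [if_pos h0]; exact (hsel2 v h0).2.2
        · rw [if_neg h0]; exact not_not.mp hv
      · rw [if_neg hvS', IsDedekindDomain.HeightOneSpectrum.mem_adicCompletionIntegers, hπK v]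
        exact le_of_lt hofAdd_lt
  let b2 : Πʳ v : IsDedekindDomain.HeightOneSpectrum (𝓞 K),
      [v.adicCompletion K, v.adicCompletionIntegers K]_[Filter.principal Sᶜ] :=
    ⟨bfin, Filter.eventually_principal.mpr hbfin_int⟩
  set b : AdeleRing (𝓞 K) K := (binf, RestrictedProduct.inclusion _ _ hScof b2) with hbdef
  -- b is in V
  have hbV : b ∈ V := by
    apply hV12
    refine Set.mem_prod.mpr ⟨?_, ?_⟩
    · apply htV
      intro w _
      show binf w ∈ t w
      simp only [hbinfdef]
      by_cases hwT : Sum.inl w ∈ T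
      · rw [if_pos hwT, ← hTinl w hwT]
        exact mem_of_mem_nhds (ht w)
      · rw [if_neg hwT]
        by_cases h0 : a.1 w = 0
        · rw [if_pos h0]; exact (hsel w h0).2
        · rw [if_neg h0]; exact mem_of_mem_nhds (ht w)
    · apply hWsub (a := b2)
      apply htW
      intro v hvJ
      have hvS' : v ∈ S' := Or.inr hvJ
      show bfin v ∈ t' v
      simp only [hbfindef]
      by_cases hvT : Sum.inr v ∈ T
      · rw [if_pos hvT, ← hTinr v hvS' hvT]
        exact mem_of_mem_nhds (ht' v)
      · rw [if_neg hvT, if_pos hvS']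
        by_cases h0 : a.2 v = 0
        · rw [if_pos h0]; exact (hsel2 v h0).2.1
        · rw [if_neg h0]; exact mem_of_mem_nhds (ht' v)
  -- b is not a unit
  have hbnu : ¬ IsUnit b := by
    refine not_isUnit_of_val_lt_one b S' hS'fin ?_
    intro v hv
    show Valued.v (bfin v) < 1
    simp only [hbfindef]
    by_cases hvT : Sum.inr v ∈ T
    · rw [if_pos hvT, map_zero]
      exact zero_lt_one
    · rw [if_neg hvT, if_neg hv, hπK v]
      exact hofAdd_lt
  -- zero set of b is T
  have hbz : zeroSet K b = T := by
    ext p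
    cases p with
    | inl w =>
      show binf w = 0 ↔ Sum.inl w ∈ T
      simp only [hbinfdef]
      constructor
      · intro h0
        by_contra hwT
        rw [if_neg hwT] at h0
        by_cases ha0 : a.1 w = 0
        · rw [if_pos ha0] at h0
          exact (hsel w ha0).1 h0
        · rw [if_neg ha0] at h0
          exact ha0 h0
      · intro hwT; rw [if_pos hwT]
    | inr v =>
      show bfin v = 0 ↔ Sum.inr v ∈ T
      simp only [hbfindef]
      constructor
      · intro h0
        by_contra hvT
        rw [if_neg hvT] at h0
        by_cases hvS : v ∈ S'
        · rw [if_pos hvS] at h0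
          by_cases ha0 : a.2 v = 0
          · rw [if_pos ha0] at h0
            exact (hsel2 v ha0).1 h0
          · rw [if_neg ha0] at h0
            exact ha0 h0
        · rw [if_neg hvS] at h0
          exact hπvne v h0
      · intro hvT; rw [if_pos hvT]
  exact ⟨b, hbV, hbnu, hbz⟩

end Aux5
section Aux6

open IsDedekindDomain.HeightOneSpectrum
open scoped RestrictedProduct

variable {K} [NumberField K]

lemma exists_xi_inl (T : Set (Place K)) :
    ∃ a : AdeleRing (𝓞 K) K, ¬ IsUnit a ∧ zeroSet K a = T := by
  classical
  choose π hπ using fun v : IsDedekindDomain.HeightOneSpectrum (𝓞 K) =>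
    v.intValuation_exists_uniformizer
  have hπK : ∀ v : IsDedekindDomain.HeightOneSpectrum (𝓞 K),
      Valued.v (algebraMap K (v.adicCompletion K) (algebraMap (𝓞 K) K (π v)))
        = ((Multiplicative.ofAdd (-1 : ℤ) : Multiplicative ℤ) : WithZero (Multiplicative ℤ)) := by
    intro v
    rw [val_algebraMap_field, IsDedekindDomain.HeightOneSpectrum.valuation_of_algebraMap]
    exact hπ v
  have hπvne : ∀ v : IsDedekindDomain.HeightOneSpectrum (𝓞 K),
      algebraMap K (v.adicCompletion K) (algebraMap (𝓞 K) K (π v)) ≠ 0 := by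
    intro v
    apply ne_zero_of_val_ne_zero
    rw [hπK v]
    exact WithZero.coe_ne_zero
  have hofAdd_lt : ((Multiplicative.ofAdd (-1 : ℤ) : Multiplicative ℤ) :
      WithZero (Multiplicative ℤ)) < 1 := by
    rw [← WithZero.coe_one, WithZero.coe_lt_coe]
    rw [show (1 : Multiplicative ℤ) = Multiplicative.ofAdd (0 : ℤ) from rfl]
    exact Multiplicative.ofAdd_lt.mpr (by norm_num)
  set ainf : NumberField.InfiniteAdeleRing K := fun w =>
    if Sum.inl w ∈ T then 0 else 1 with hainfdef
  set afin : ∀ v : IsDedekindDomain.HeightOneSpectrum (𝓞 K), v.adicCompletion K := fun v =>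
    if Sum.inr v ∈ T then 0
    else algebraMap K (v.adicCompletion K) (algebraMap (𝓞 K) K (π v)) with hafindef
  have hafin_adele : ∀ᶠ v in Filter.cofinite, afin v ∈ v.adicCompletionIntegers K := by
    refine Filter.Eventually.of_forall ?_
    intro v
    simp only [hafindef]
    by_cases hvT : Sum.inr v ∈ T
    · rw [if_pos hvT]; exact zero_mem _
    · rw [if_neg hvT, IsDedekindDomain.HeightOneSpectrum.mem_adicCompletionIntegers, hπK v]
      exact le_of_lt hofAdd_lt
  set a : AdeleRing (𝓞 K) K := (ainf, (⟨afin, hafin_adele⟩ : Πʳ v : IsDedekindDomain.HeightOneSpectrum (𝓞 K),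
    [v.adicCompletion K, v.adicCompletionIntegers K])) with hadef
  refine ⟨a, ?_, ?_⟩
  · refine not_isUnit_of_val_lt_one a ∅ Set.finite_empty ?_
    intro v _
    show Valued.v (afin v) < 1
    simp only [hafindef]
    by_cases hvT : Sum.inr v ∈ T
    · rw [if_pos hvT, map_zero]; exact zero_lt_one
    · rw [if_neg hvT, hπK v]; exact hofAdd_lt
  · ext p
    cases p with
    | inl w =>
      show ainf w = 0 ↔ Sum.inl w ∈ T
      simp only [hainfdef]
      constructor
      · intro h0
        by_contra hwT
        rw [if_neg hwT] at h0
        exact one_ne_zero h0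
      · intro hwT; rw [if_pos hwT]
    | inr v =>
      show afin v = 0 ↔ Sum.inr v ∈ T
      simp only [hafindef]
      constructor
      · intro h0
        by_contra hvT
        rw [if_neg hvT] at h0
        exact hπvne v h0
      · intro hvT; rw [if_pos hvT]

end Aux6
/-- The map `Υ : 2^{Σ_K} ⊔ C_K → 2^{Σ_K}`, identity on `2^{Σ_K}` and constant `∅` on `C_K`,
is continuous and open from the quasi-orbit topology to the power-cofinite topology. -/
theorem upsilon_continuous_isOpenMap :
    @Continuous _ _ (qoTop K) (pcTop K)
      (Sum.elim id fun _ : IdeleClassGroup K => (∅ : Set (Place K))) ∧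
    @IsOpenMap _ _ (qoTop K) (pcTop K)
      (Sum.elim id fun _ : IdeleClassGroup K => (∅ : Set (Place K))) := by
  classical
  constructor
  · rw [qoTop, continuous_coinduced_dom, upsilon_comp_xi]
    exact continuous_zeroSet
  · intro U hU
    have hU' : IsOpen (Xi K ⁻¹' U) := hU
    apply pc_isOpen_of_forall
    rintro t ⟨x, hxU, rfl⟩
    cases x with
    | inl T =>
      obtain ⟨a, hanu, haz⟩ := exists_xi_inl T
      have hXia : Xi K a = Sum.inl T := by rw [Xi, dif_neg hanu, haz]
      have haV : a ∈ Xi K ⁻¹' U := by rw [Set.mem_preimage, hXia]; exact hxU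
      obtain ⟨F, hF⟩ := key_construction _ hU' a haV
      refine ⟨F.filter (fun p => coord K a p ≠ 0), ?_, ?_⟩
      · intro p hp
        rw [Finset.mem_filter] at hp
        show p ∉ T
        intro hpT
        rw [← haz] at hpT
        exact hp.2 hpT
      · intro T' hT'
        have hyp : ∀ p ∈ F, p ∈ T' → coord K a p = 0 := by
          intro p hpF hpT'
          by_contra hne
          exact hT' p (Finset.mem_filter.mpr ⟨hpF, hne⟩) hpT'
        obtain ⟨b, hbV, hbnu, hbz⟩ := hF T' hyp
        have hXib : Xi K b = Sum.inl T' := by rw [Xi, dif_neg hbnu, hbz]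
        refine ⟨Sum.inl T', ?_, rfl⟩
        have := hbV
        rw [Set.mem_preimage, hXib] at this
        exact this
    | inr c =>
      obtain ⟨u, hu⟩ := Quotient.exists_rep c
      set a : AdeleRing (𝓞 K) K := (u : (AdeleRing (𝓞 K) K)ˣ).val with hadef
      have hau : IsUnit a := Units.isUnit u
      have hXia : Xi K a = Sum.inr c := by
        rw [Xi, dif_pos hau]
        have h1 : hau.unit = u := Units.ext hau.unit_spec
        rw [h1, ← hu]
      have haV : a ∈ Xi K ⁻¹' U := by rw [Set.mem_preimage, hXia]; exact hxU
      obtain ⟨F, hF⟩ := key_construction _ hU' a haV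
      refine ⟨F, ?_, ?_⟩
      · intro p _
        show p ∉ (∅ : Set (Place K))
        exact Set.notMem_empty p
      · intro T' hT'
        have hyp : ∀ p ∈ F, p ∈ T' → coord K a p = 0 :=
          fun p hpF hpT' => absurd hpT' (hT' p hpF)
        obtain ⟨b, hbV, hbnu, hbz⟩ := hF T' hyp
        have hXib : Xi K b = Sum.inl T' := by rw [Xi, dif_neg hbnu, hbz]
        refine ⟨Sum.inl T', ?_, rfl⟩
        have := hbV
        rw [Set.mem_preimage, hXib] at this
        exact this

end
end

section
/- Let X be either ℝ/{±1} (with X^* := ℝ^*/{±1}) or ℂ/μ for a finite subgroup μ of the circle group (with X^* := ℂ^*/μ), and let Γ be a free abelian subgroup of the multiplicative group X^*, acting on X by multiplication (call this action γ). Then γ is homotopic to the trivial action: there exists a family (γ^t)_{t∈[0,1]} of actions of Γ on X by homeomorphisms such that γ^1 = γ, γ^0 is the trivial action, and for each s ∈ Γ the map [0,1] × X → X, (t,x) ↦ γ^t_s(x), is continuous. -/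
noncomputable section

/-- The multiplicative congruence on a commutative monoid `𝕜` identifying `x` and `y` when
they differ by multiplication by an element of the subgroup `μ ≤ 𝕜ˣ`. Its quotient
`(muCon 𝕜 μ).Quotient` is the space `X = 𝕜/μ` (the quotient of `𝕜` by the multiplication
action of `μ`), which is a commutative monoid and carries the quotient topology. -/
def muCon (𝕜 : Type*) [CommMonoid 𝕜] (μ : Subgroup 𝕜ˣ) : Con 𝕜 where
  r x y := ∃ m : μ, ((m : 𝕜ˣ) : 𝕜) * y = x
  iseqv := {
    refl := fun x => ⟨1, one_mul x⟩
    symm := by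
      rintro x y ⟨m, rfl⟩
      exact ⟨m⁻¹, by
        rw [← mul_assoc, ← Units.val_mul]
        norm_cast
        rw [inv_mul_cancel]
        simp⟩
    trans := by
      rintro x y z ⟨m₁, rfl⟩ ⟨m₂, rfl⟩
      exact ⟨m₁ * m₂, by
        rw [← mul_assoc, ← Units.val_mul]
        norm_cast⟩ }
  mul' := by
    rintro w x y z ⟨m₁, rfl⟩ ⟨m₂, rfl⟩
    exact ⟨m₁ * m₂, by
      push_cast
      rw [mul_mul_mul_comm]⟩

instance (𝕜 : Type*) [CommMonoid 𝕜] [TopologicalSpace 𝕜] (μ : Subgroup 𝕜ˣ) :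
    TopologicalSpace (muCon 𝕜 μ).Quotient :=
  instTopologicalSpaceQuotient

/-- The statement, for the quotient `X = 𝕜/μ` with `X^* = Xˣ` (the multiplicative group of
`X`, which is the image of the invertible elements of `𝕜`): for every free abelian subgroup
`Γ ≤ X^*`, the multiplication action `γ` of `Γ` on `X` is homotopic to the trivial action,
i.e. there are actions `γ^t` (`t ∈ [0,1]`) of `Γ` on `X` by homeomorphisms with `γ^1 = γ`,
`γ^0` trivial, such that for each `s ∈ Γ` the map `(t, x) ↦ γ^t_s(x)` is continuous. -/
def MulActionHomotopicToTrivial (𝕜 : Type*) [CommMonoid 𝕜] [TopologicalSpace 𝕜]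
    (μ : Subgroup 𝕜ˣ) : Prop :=
  ∀ Γ : Subgroup ((muCon 𝕜 μ).Quotient)ˣ, Module.Free ℤ (Additive Γ) →
    ∃ H : Γ → Set.Icc (0 : ℝ) 1 → (muCon 𝕜 μ).Quotient → (muCon 𝕜 μ).Quotient,
      (∀ t x, H 1 t x = x) ∧
      (∀ s₁ s₂ t x, H (s₁ * s₂) t x = H s₁ t (H s₂ t x)) ∧
      (∀ s t, Continuous (H s t)) ∧
      (∀ s, Continuous fun p : Set.Icc (0 : ℝ) 1 × (muCon 𝕜 μ).Quotient =>
        H s p.1 p.2) ∧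
      (∀ s x, H s 1 x = (((s : ((muCon 𝕜 μ).Quotient)ˣ) : (muCon 𝕜 μ).Quotient)) * x) ∧
      (∀ s x, H s 0 x = x)

section Aux

variable {𝕜 : Type*} [CommMonoid 𝕜] [TopologicalSpace 𝕜] [ContinuousMul 𝕜] (μ : Subgroup 𝕜ˣ)

lemma muCon_continuous_mk : Continuous ((↑) : 𝕜 → (muCon 𝕜 μ).Quotient) :=
  continuous_quotient_mk'

lemma muCon_surjective_mk : Function.Surjective ((↑) : 𝕜 → (muCon 𝕜 μ).Quotient) :=
  Quotient.mk''_surjective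

lemma muCon_isOpenMap_mk : IsOpenMap ((↑) : 𝕜 → (muCon 𝕜 μ).Quotient) := by
  intro U hU
  refine (isOpen_coinduced (f := ((↑) : 𝕜 → (muCon 𝕜 μ).Quotient))).mpr ?_
  have : ((↑) : 𝕜 → (muCon 𝕜 μ).Quotient) ⁻¹' (((↑) : 𝕜 → (muCon 𝕜 μ).Quotient) '' U)
      = ⋃ m : μ, (fun x : 𝕜 => ((m : 𝕜ˣ) : 𝕜) * x) ⁻¹' U := by
    ext x
    simp only [Set.mem_preimage, Set.mem_image, Set.mem_iUnion]
    constructor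
    · rintro ⟨u, hu, h⟩
      obtain ⟨m, hm⟩ := ((muCon 𝕜 μ).eq).mp h
      exact ⟨m, hm ▸ hu⟩
    · rintro ⟨m, hm⟩
      exact ⟨((m : 𝕜ˣ) : 𝕜) * x, hm, (((muCon 𝕜 μ).eq).mpr ⟨m, rfl⟩)⟩
  rw [this]
  exact isOpen_iUnion fun m => hU.preimage (continuous_const.mul continuous_id)

lemma muCon_isOpenQuotientMap_mk :
    IsOpenQuotientMap ((↑) : 𝕜 → (muCon 𝕜 μ).Quotient) :=
  ⟨muCon_surjective_mk μ, muCon_continuous_mk μ, muCon_isOpenMap_mk μ⟩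

lemma muCon_continuousMul : ContinuousMul (muCon 𝕜 μ).Quotient := by
  constructor
  have hq : Topology.IsQuotientMap (Prod.map ((↑) : 𝕜 → (muCon 𝕜 μ).Quotient)
      ((↑) : 𝕜 → (muCon 𝕜 μ).Quotient)) :=
    ((muCon_isOpenMap_mk μ).prodMap (muCon_isOpenMap_mk μ)).isQuotientMap
      ((muCon_continuous_mk μ).prodMap (muCon_continuous_mk μ))
      ((muCon_surjective_mk μ).prodMap (muCon_surjective_mk μ))
  rw [hq.continuous_iff]
  have : (fun p : 𝕜 × 𝕜 =>
      ((p.1 : (muCon 𝕜 μ).Quotient) * (p.2 : (muCon 𝕜 μ).Quotient)))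
      = fun p : 𝕜 × 𝕜 => ((p.1 * p.2 : 𝕜) : (muCon 𝕜 μ).Quotient) := by
    funext p; exact (Con.coe_mul _ _).symm
  show Continuous fun p : 𝕜 × 𝕜 =>
      ((p.1 : (muCon 𝕜 μ).Quotient) * (p.2 : (muCon 𝕜 μ).Quotient))
  rw [this]
  exact (muCon_continuous_mk μ).comp continuous_mul

end Aux

end

noncomputable section

lemma key_general {𝕜 : Type*} [CommMonoid 𝕜] [TopologicalSpace 𝕜] [ContinuousMul 𝕜]
    (μ : Subgroup 𝕜ˣ) {V : Type*} [AddCommGroup V] [Module ℝ V] [TopologicalSpace V]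
    [ContinuousSMul ℝ V]
    (e : V → 𝕜) (he_add : ∀ x y, e (x + y) = e x * e y) (he0 : e 0 = 1)
    (hec : Continuous e)
    (hsurj : ∀ u : ((muCon 𝕜 μ).Quotient)ˣ,
      ∃ v : V, ((e v : 𝕜) : (muCon 𝕜 μ).Quotient) = (u : (muCon 𝕜 μ).Quotient)) :
    MulActionHomotopicToTrivial 𝕜 μ := by
  intro Γ hfree
  haveI := hfree
  haveI : ContinuousMul (muCon 𝕜 μ).Quotient := muCon_continuousMul μ
  set X := (muCon 𝕜 μ).Quotient with hX
  -- basis of the free abelian group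
  let B := Module.Free.chooseBasis ℤ (Additive Γ)
  choose v hv using fun i => hsurj ((Additive.toMul (B i) : Γ) : Xˣ)
  let f : Additive Γ →ₗ[ℤ] V := B.constr ℤ v
  -- e of anything is a unit
  have heinv : ∀ w : V, e w * e (-w) = 1 := fun w => by
    rw [← he_add, add_neg_cancel, he0]
  let eu : V → 𝕜ˣ := fun w => ⟨e w, e (-w), heinv w, by rw [mul_comm]; exact heinv w⟩
  let π : 𝕜 →* X := Con.mk' (muCon 𝕜 μ)
  let g : Γ →* Xˣ :=
    { toFun := fun s => Units.map π (eu (f (Additive.ofMul s)))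
      map_one' := by
        apply Units.ext
        show π (e (f (Additive.ofMul (1 : Γ)))) = 1
        rw [ofMul_one, map_zero, he0, map_one]
      map_mul' := fun s₁ s₂ => by
        apply Units.ext
        show π (e (f (Additive.ofMul (s₁ * s₂)))) =
          π (e (f (Additive.ofMul s₁))) * π (e (f (Additive.ofMul s₂)))
        rw [ofMul_mul, map_add, he_add, map_mul] }
  have hgen : Subgroup.closure (Set.range fun i => (Additive.toMul (B i) : Γ)) = ⊤ := by
    rw [Subgroup.eq_top_iff']
    intro s
    have hs : Additive.ofMul s ∈ AddSubgroup.closure (Set.range B) := by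
      rw [← Submodule.span_int_eq_addSubgroupClosure, B.span_eq]
      trivial
    have := AddSubgroup.closure_induction
      (p := fun a _ => (Additive.toMul a : Γ) ∈
        Subgroup.closure (Set.range fun i => (Additive.toMul (B i) : Γ)))
      (fun a ha => by
        obtain ⟨i, rfl⟩ := ha
        exact Subgroup.subset_closure ⟨i, rfl⟩)
      (by simpa using Subgroup.one_mem _)
      (fun a b _ _ ha hb => by
        simpa using Subgroup.mul_mem _ ha hb)
      (fun a _ ha => by
        simpa using Subgroup.inv_mem _ ha) hs
    simpa using this
  have key : ∀ s : Γ, ((e (f (Additive.ofMul s)) : 𝕜) : X) = ((s : Xˣ) : X) := by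
    have : g = Γ.subtype := by
      apply MonoidHom.eq_of_eqOn_dense hgen
      rintro s ⟨i, rfl⟩
      apply Units.ext
      show π (e (f (Additive.ofMul (Additive.toMul (B i))))) = _
      have hfi : f (Additive.ofMul (Additive.toMul (B i))) = v i := B.constr_basis ℤ v i
      rw [hfi]
      exact hv i
    intro s
    have := congrArg Units.val (congrFun (congrArg (↑·) this) s)
    exact this
  refine ⟨fun s t x => ((e ((t : ℝ) • f (Additive.ofMul (s : Γ))) : 𝕜) : X) * x,
    ?_, ?_, ?_, ?_, ?_, ?_⟩
  · intro t x
    show ((e ((t : ℝ) • f (Additive.ofMul (1 : Γ))) : 𝕜) : X) * x = x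
    rw [ofMul_one, map_zero, smul_zero, he0, Con.coe_one, one_mul]
  · intro s₁ s₂ t x
    show ((e ((t : ℝ) • f (Additive.ofMul (s₁ * s₂))) : 𝕜) : X) * x = _
    rw [ofMul_mul, map_add, smul_add, he_add, Con.coe_mul, mul_assoc]
  · intro s t
    exact continuous_mul_left _
  · intro s
    have hc : Continuous fun t : Set.Icc (0 : ℝ) 1 =>
        ((e ((t : ℝ) • f (Additive.ofMul (s : Γ))) : 𝕜) : X) :=
      (muCon_continuous_mk μ).comp (hec.comp (continuous_subtype_val.smul continuous_const))
    exact (hc.comp continuous_fst).mul continuous_snd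
  · intro s x
    show ((e (((1 : Set.Icc (0:ℝ) 1) : ℝ) • f (Additive.ofMul (s : Γ))) : 𝕜) : X) * x = _
    rw [Set.Icc.coe_one, one_smul, key s]

  · intro s x
    show ((e (((0 : Set.Icc (0:ℝ) 1) : ℝ) • f (Additive.ofMul (s : Γ))) : 𝕜) : X) * x = x
    rw [Set.Icc.coe_zero, zero_smul, he0, Con.coe_one, one_mul]

end

noncomputable section

lemma muCon_unit_lift {𝕜 : Type*} [Field 𝕜] [TopologicalSpace 𝕜] (μ : Subgroup 𝕜ˣ)
    (u : ((muCon 𝕜 μ).Quotient)ˣ) :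
    ∃ a : 𝕜, a ≠ 0 ∧ ((a : 𝕜) : (muCon 𝕜 μ).Quotient) = (u : (muCon 𝕜 μ).Quotient) := by
  obtain ⟨a, ha⟩ : ∃ a : 𝕜, ((a : 𝕜) : (muCon 𝕜 μ).Quotient) = (u : (muCon 𝕜 μ).Quotient) :=
    Quotient.mk''_surjective _
  obtain ⟨b, hb⟩ : ∃ b : 𝕜, ((b : 𝕜) : (muCon 𝕜 μ).Quotient) = ((u⁻¹ : _ˣ) : (muCon 𝕜 μ).Quotient) :=
    Quotient.mk''_surjective _
  have h1 : ((a * b : 𝕜) : (muCon 𝕜 μ).Quotient) = ((1 : 𝕜) : (muCon 𝕜 μ).Quotient) := by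
    rw [Con.coe_mul, ha, hb, Con.coe_one]
    exact u.mul_inv
  obtain ⟨m, hm⟩ := ((muCon 𝕜 μ).eq).mp h1
  have hab : a * b ≠ 0 := by
    rw [← hm]
    simp [Units.ne_zero]
  exact ⟨a, left_ne_zero_of_mul hab, ha⟩

lemma real_case : MulActionHomotopicToTrivial ℝ (Subgroup.zpowers (-1 : ℝˣ)) := by
  apply key_general (V := ℝ) _ Real.exp Real.exp_add Real.exp_zero Real.continuous_exp
  intro u
  obtain ⟨a, ha0, ha⟩ := muCon_unit_lift _ u
  rcases ha0.lt_or_gt with h | h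
  · refine ⟨Real.log (-a), ?_⟩
    rw [Real.exp_log (by linarith), ← ha]
    exact ((muCon ℝ _).eq).mpr ⟨⟨-1, Subgroup.mem_zpowers _⟩, by simp⟩
  · exact ⟨Real.log a, by rw [Real.exp_log h, ha]⟩

lemma complex_case (μ : Subgroup ℂˣ) : MulActionHomotopicToTrivial ℂ μ := by
  apply key_general (V := ℂ) _ Complex.exp Complex.exp_add Complex.exp_zero Complex.continuous_exp
  intro u
  obtain ⟨a, ha0, ha⟩ := muCon_unit_lift _ u
  exact ⟨Complex.log a, by rw [Complex.exp_log ha0, ha]⟩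


/-- Let `X` be either `ℝ/{±1}` (with `X^* = ℝ^*/{±1}`) or `ℂ/μ` for a finite subgroup `μ`
of the circle group (with `X^* = ℂ^*/μ`), and let `Γ` be a free abelian subgroup of the
multiplicative group `X^*`, acting on `X` by multiplication. Then this action is homotopic
to the trivial action. -/
theorem mulAction_homotopicToTrivial_real_complex :
    MulActionHomotopicToTrivial ℝ (Subgroup.zpowers (-1 : ℝˣ)) ∧
    ∀ μ : Subgroup ℂˣ, (μ : Set ℂˣ).Finite → (∀ z ∈ μ, ‖(z : ℂ)‖ = 1) →
      MulActionHomotopicToTrivial ℂ μ :=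
  ⟨real_case, fun μ _ _ => complex_case μ⟩

end
end
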